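/- arXiv:math/0603112 — 4 statements merged into one kernel-verified Lean document; each statement's English description precedes it below -/
import Mathlib

section
/- The Bessel function of order zero admits the integral representation J₀(x) = (1/2π) ∫_{−π}^{π} e^{i x sin θ} dθ for every real x, where J₀ is defined by the power series J₀(x) = Σ_{j=0}^∞ ((−1)^j/(j!)²) (x/2)^{2j}. -/
open Real intervalIntegral MeasureTheory

private lemma prod_ratio' (j : ℕ) :
    ∏ i ∈ Finset.range j, (2 * (i : ℝ) + 1) / (2 * i + 2) =
      (Nat.factorial (2 * j) : ℝ) / (4 ^ j * (Nat.factorial j : ℝ) ^ 2) := by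
  induction j with
  | zero => simp
  | succ k ih =>
      rw [Finset.prod_range_succ, ih]
      have h1 : (Nat.factorial (2 * k) : ℝ) ≠ 0 := Nat.cast_ne_zero.mpr (Nat.factorial_ne_zero _)
      have h2 : (Nat.factorial k : ℝ) ≠ 0 := Nat.cast_ne_zero.mpr (Nat.factorial_ne_zero _)
      have e : 2 * (k + 1) = (2 * k + 1) + 1 := by ring
      rw [e, Nat.factorial_succ, Nat.factorial_succ, Nat.factorial_succ]
      push_cast
      field_simp
      ring

private lemma sin_pow_even_integral' (j : ℕ) :
    ∫ θ in (-π)..π, Real.sin θ ^ (2 * j) =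
      2 * π * ((Nat.factorial (2 * j) : ℝ) / (4 ^ j * (Nat.factorial j : ℝ) ^ 2)) := by
  have hcont : Continuous fun θ : ℝ => Real.sin θ ^ (2 * j) := by fun_prop
  have hsymm : ∫ θ in (-π)..(0:ℝ), Real.sin θ ^ (2 * j) = ∫ θ in (0:ℝ)..π, Real.sin θ ^ (2 * j) := by
    have h := intervalIntegral.integral_comp_neg (a := (0:ℝ)) (b := π)
      (fun θ => Real.sin θ ^ (2 * j))
    simp only [Real.sin_neg, (even_two_mul j).neg_pow, neg_zero] at h
    exact h.symm
  rw [← intervalIntegral.integral_add_adjacent_intervals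
      (hcont.intervalIntegrable _ _) (hcont.intervalIntegrable _ _) (b := 0),
    hsymm, integral_sin_pow_even, prod_ratio']
  ring

private lemma sin_pow_odd_integral' (j : ℕ) :
    ∫ θ in (-π)..π, Real.sin θ ^ (2 * j + 1) = 0 := by
  have hcont : Continuous fun θ : ℝ => Real.sin θ ^ (2 * j + 1) := by fun_prop
  have hsymm : ∫ θ in (-π)..(0:ℝ), Real.sin θ ^ (2 * j + 1)
      = - ∫ θ in (0:ℝ)..π, Real.sin θ ^ (2 * j + 1) := by
    have h := intervalIntegral.integral_comp_neg (a := (0:ℝ)) (b := π)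
      (fun θ => Real.sin θ ^ (2 * j + 1))
    simp only [Real.sin_neg, (odd_two_mul_add_one j).neg_pow, neg_zero,
      intervalIntegral.integral_neg] at h
    linarith [h]
  rw [← intervalIntegral.integral_add_adjacent_intervals
      (hcont.intervalIntegrable _ _) (hcont.intervalIntegrable _ _) (b := 0), hsymm]
  ring

/-- The Bessel function of order zero, defined by its power series. -/
noncomputable def J0 (x : ℝ) : ℝ :=
  ∑' j : ℕ, ((-1 : ℝ) ^ j / ((Nat.factorial j : ℝ)) ^ 2) * (x / 2) ^ (2 * j)

set_option maxHeartbeats 1600000 in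
/-- Integral representation of the Bessel function of order zero:
`J₀(x) = (1/2π) ∫_{−π}^{π} e^{i x sin θ} dθ`. -/
theorem J0_integral_repr (x : ℝ) :
    (J0 x : ℂ) =
      (1 / (2 * (Real.pi : ℂ))) *
        ∫ θ in (-Real.pi)..Real.pi, Complex.exp (Complex.I * (x : ℂ) * (Real.sin θ : ℂ)) := by
  have hpi := Real.pi_pos
  set a : ℕ → ℝ := fun j => ((-1 : ℝ) ^ j / ((Nat.factorial j : ℝ)) ^ 2) * (x / 2) ^ (2 * j)
    with hadef
  set f : ℕ → ℝ → ℂ := fun n θ => (Complex.I * x * Real.sin θ) ^ n / n.factorial with hfdef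
  -- continuity & integrability
  have hcont : ∀ n, Continuous (f n) := by intro n; simp only [hfdef]; fun_prop
  have hInt : ∀ n, Integrable (f n) (volume.restrict (Set.Ioc (-π) π)) := fun n =>
    (hcont n).integrableOn_Ioc
  -- pointwise norm bound
  have hbound : ∀ n, ∀ θ : ℝ, ‖f n θ‖ ≤ |x| ^ n / n.factorial := by
    intro n θ
    simp only [hfdef, norm_div, norm_pow, Complex.norm_natCast]
    have h1 : ‖Complex.I * ↑x * ↑(Real.sin θ)‖ ≤ |x| := by
      calc ‖Complex.I * (x:ℂ) * (Real.sin θ : ℂ)‖ = 1 * |x| * |Real.sin θ| := by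
            rw [norm_mul, norm_mul, Complex.norm_I, Complex.norm_real, Complex.norm_real,
              Real.norm_eq_abs, Real.norm_eq_abs]
        _ ≤ 1 * |x| * 1 := by
            apply mul_le_mul_of_nonneg_left (Real.abs_sin_le_one θ) (by positivity)
        _ = |x| := by ring
    gcongr
  -- summability of norms of integrals
  have hSum : Summable fun n => ∫ θ in Set.Ioc (-π) π, ‖f n θ‖ := by
    apply Summable.of_nonneg_of_le
      (fun n => integral_nonneg fun θ => norm_nonneg _)
      (fun n => ?_) (((Real.summable_pow_div_factorial |x|).mul_left (2*π)))
    have hle : ‖∫ θ in Set.Ioc (-π) π, ‖f n θ‖‖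
        ≤ (|x| ^ n / n.factorial) * (volume (Set.Ioc (-π) π)).toReal := by
      apply MeasureTheory.norm_setIntegral_le_of_norm_le_const
      · rw [Real.volume_Ioc]; exact ENNReal.ofReal_lt_top
      · intro θ _
        rw [Real.norm_eq_abs, _root_.abs_of_nonneg (norm_nonneg _)]
        exact hbound n θ
    have hv : (volume (Set.Ioc (-π) π)).toReal = 2 * π := by
      rw [Real.volume_Ioc, ENNReal.toReal_ofReal (by linarith)]; ring
    calc ∫ θ in Set.Ioc (-π) π, ‖f n θ‖ ≤ ‖∫ θ in Set.Ioc (-π) π, ‖f n θ‖‖ := le_abs_self _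
      _ ≤ (|x| ^ n / n.factorial) * (2*π) := by rw [← hv]; exact hle
      _ = 2*π * (|x| ^ n / n.factorial) := by ring
  -- exp as tsum
  have hexp : ∀ θ : ℝ, Complex.exp (Complex.I * x * Real.sin θ) = ∑' n, f n θ := by
    intro θ
    rw [Complex.exp_eq_exp_ℂ, NormedSpace.exp_eq_tsum_div]
  -- swap integral and sum
  have hswap : (∫ θ in (-π)..π, Complex.exp (Complex.I * x * Real.sin θ))
      = ∑' n, ∫ θ in (-π)..π, f n θ := by
    rw [intervalIntegral.integral_of_le (by linarith)]
    simp_rw [hexp]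
    rw [← MeasureTheory.integral_tsum_of_summable_integral_norm hInt hSum]
    refine tsum_congr fun n => ?_
    rw [intervalIntegral.integral_of_le (by linarith)]
  -- value of each integral
  have hval : ∀ n, (∫ θ in (-π)..π, f n θ)
      = (Complex.I * x) ^ n / n.factorial * ((∫ θ in (-π)..π, Real.sin θ ^ n : ℝ) : ℂ) := by
    intro n
    simp only [hfdef]
    calc (∫ θ in (-π)..π, (Complex.I * x * Real.sin θ) ^ n / n.factorial)
        = ∫ θ in (-π)..π, ((Complex.I * x) ^ n / n.factorial) * ((Real.sin θ : ℂ)) ^ n := by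
          congr 1; ext θ; rw [mul_pow]; ring
      _ = ((Complex.I * x) ^ n / n.factorial) * ∫ θ in (-π)..π, ((Real.sin θ : ℂ)) ^ n :=
          intervalIntegral.integral_const_mul _ _
      _ = _ := by
          congr 1
          rw [← intervalIntegral.integral_ofReal]
          push_cast
          rfl
  -- even terms
  have heven : ∀ j, (∫ θ in (-π)..π, f (2*j) θ) = (2*π : ℂ) * ((a j : ℝ) : ℂ) := by
    intro j
    rw [hval, sin_pow_even_integral']
    have h1 : (Complex.I * x) ^ (2 * j) = (-1 : ℂ) ^ j * (x:ℂ) ^ (2*j) := by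
      rw [pow_mul, mul_pow, Complex.I_sq, pow_mul]
      ring
    rw [h1, hadef]
    have h2 : ((Nat.factorial (2*j) : ℕ) : ℂ) ≠ 0 :=
      Nat.cast_ne_zero.mpr (Nat.factorial_ne_zero _)
    have h3 : ((Nat.factorial j : ℕ) : ℂ) ≠ 0 :=
      Nat.cast_ne_zero.mpr (Nat.factorial_ne_zero _)
    push_cast
    rw [div_pow, show ((2:ℂ))^(2*j) = 4^j by rw [pow_mul]; norm_num]
    field_simp
  -- odd terms
  have hodd : ∀ j, (∫ θ in (-π)..π, f (2*j+1) θ) = 0 := by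
    intro j
    rw [hval, sin_pow_odd_integral']
    simp
  -- summability of the power series
  have haR : Summable a := by
    rw [← summable_abs_iff]
    apply Summable.of_nonneg_of_le (fun j => abs_nonneg _) (fun j => ?_)
      (Real.summable_pow_div_factorial ((x/2)^2))
    have habs : |a j| = ((x/2)^2)^j / ((Nat.factorial j : ℝ))^2 := by
      have hrw : a j = ((-1:ℝ)^j) * (((x/2)^2)^j / ((Nat.factorial j : ℝ))^2) := by
        simp only [hadef]
        rw [pow_mul]
        ring
      rw [hrw, abs_mul, _root_.abs_pow, abs_neg, abs_one, one_pow, one_mul,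
        _root_.abs_of_nonneg (by positivity : (0:ℝ) ≤ ((x/2)^2)^j / ((Nat.factorial j : ℝ))^2)]
    rw [habs]
    have hfacpos : (0:ℝ) < (Nat.factorial j : ℝ) := by exact_mod_cast Nat.factorial_pos j
    have hone : (1:ℝ) ≤ (Nat.factorial j : ℝ) := by
      exact_mod_cast Nat.one_le_iff_ne_zero.mpr (Nat.factorial_ne_zero j)
    have hfac : (Nat.factorial j : ℝ) ≤ ((Nat.factorial j : ℝ))^2 := by nlinarith
    exact div_le_div_of_nonneg_left (by positivity) hfacpos hfac
  have haC : Summable fun j => ((a j : ℝ) : ℂ) := Complex.summable_ofReal.mpr haR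
  -- assemble
  rw [hswap]
  have hesum : Summable fun k => ∫ θ in (-π)..π, f (2*k) θ := by
    simp only [heven]; exact haC.mul_left _
  have hosum : Summable fun k => ∫ θ in (-π)..π, f (2*k+1) θ := by
    simp only [hodd]; exact summable_zero
  rw [← tsum_even_add_odd hesum hosum]
  simp only [heven, hodd, tsum_zero, add_zero, tsum_mul_left]
  have hJ0 : (J0 x : ℂ) = ∑' j, ((a j : ℝ) : ℂ) := by
    rw [J0, Complex.ofReal_tsum]
  rw [hJ0]
  have hne : (2 * (π:ℂ)) ≠ 0 := by
    simp [Real.pi_ne_zero]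
  field_simp
end

section
/- There exist constants C₁, C₂ > 0 such that for every n ≥ 1, C₁ n ≤ ‖e_n′‖_{L²(Θ)} ≤ C₂ n. -/
/-- The `L²(Θ)` norm of `J₀(z_n ·)`. -/
noncomputable def besselL2 (z : ℕ → ℝ) (n : ℕ) : ℝ :=
  Real.sqrt (2 * Real.pi * ∫ r in (0 : ℝ)..1, (J0 (z n * r)) ^ 2 * r)

/-- The radial derivative `e_n′(r) = z_n J₀′(z_n r)/‖J₀(z_n ·)‖_{L²(Θ)}`. -/
noncomputable def efun' (z : ℕ → ℝ) (n : ℕ) (r : ℝ) : ℝ :=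
  z n * deriv J0 (z n * r) / besselL2 z n

open Filter Set Real intervalIntegral

namespace Bes

noncomputable def a (j : ℕ) : ℝ := (-1) ^ j / ((Nat.factorial j : ℝ) ^ 2 * 4 ^ j)

noncomputable def T0 (j : ℕ) (x : ℝ) : ℝ := a j * x ^ (2 * j)
noncomputable def T1 (j : ℕ) (x : ℝ) : ℝ := (a j * (2 * j : ℕ)) * x ^ (2 * j - 1)
noncomputable def T2 (j : ℕ) (x : ℝ) : ℝ :=
  (a j * (2 * j : ℕ) * ((2 * j - 1 : ℕ) : ℝ)) * x ^ (2 * j - 1 - 1)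

noncomputable def J0d (x : ℝ) : ℝ := ∑' j, T1 j x
noncomputable def J0dd (x : ℝ) : ℝ := ∑' j, T2 j x

lemma abs_a_le (j : ℕ) : |a j| ≤ 1 / (Nat.factorial j : ℝ) := by
  have h1 : (1:ℝ) ≤ (Nat.factorial j : ℝ) := by exact_mod_cast Nat.one_le_iff_ne_zero.mpr (Nat.factorial_ne_zero j)
  have h4 : (1:ℝ) ≤ 4 ^ j := one_le_pow₀ (by norm_num : (1:ℝ) ≤ 4)
  have hpos : (0:ℝ) < (Nat.factorial j : ℝ) ^ 2 * 4 ^ j := by positivity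
  rw [a, abs_div, abs_pow, abs_neg, abs_one, one_pow, abs_of_pos hpos]
  rw [div_le_div_iff₀ hpos (by linarith)]
  have : (Nat.factorial j : ℝ) * ((Nat.factorial j : ℝ) * 4 ^ j) ≥ (Nat.factorial j : ℝ) * 1 := by
    apply mul_le_mul_of_nonneg_left _ (by linarith)
    nlinarith
  nlinarith

/-- majorant -/
noncomputable def maj (R : ℝ) (j : ℕ) : ℝ := ((j:ℝ) + 1) ^ 3 * (R ^ 2) ^ j / (Nat.factorial j : ℝ)

lemma summable_maj (R : ℝ) : Summable (maj R) := by
  apply Summable.of_nonneg_of_le (fun j => by rw [maj]; positivity)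
    (fun j => ?_) (Real.summable_pow_div_factorial (8 * R ^ 2))
  have hf : (0:ℝ) < (Nat.factorial j : ℝ) := by exact_mod_cast Nat.factorial_pos j
  have h1 : ((j:ℝ) + 1) ^ 3 ≤ 8 ^ j := by
    have : (j:ℝ) + 1 ≤ 2 ^ j := by
      exact_mod_cast Nat.succ_le_of_lt (Nat.lt_two_pow_self (n := j))
    calc ((j:ℝ) + 1) ^ 3 ≤ (2 ^ j) ^ 3 := by
          apply pow_le_pow_left₀ (by positivity) this
      _ = 8 ^ j := by rw [← pow_mul, mul_comm, pow_mul]; norm_num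
  rw [maj, div_le_div_iff₀ hf hf]
  have h2 : (0:ℝ) ≤ (R^2)^j := by positivity
  have h8 : (8 * R ^ 2) ^ j = 8 ^ j * (R ^ 2) ^ j := mul_pow 8 (R^2) j
  rw [h8]
  have := mul_le_mul_of_nonneg_right h1 h2
  nlinarith [this, hf]


-- bounds
lemma bound_core {R x : ℝ} (hR : 1 ≤ R) (hx : |x| ≤ R) (j c : ℕ) (e : ℕ) (he : e ≤ 2 * j)
    (hc : (c : ℝ) ≤ ((j:ℝ)+1)^3) :
    |a j * (c : ℝ) * x ^ e| ≤ maj R j := by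
  have hf : (0:ℝ) < (Nat.factorial j : ℝ) := by exact_mod_cast Nat.factorial_pos j
  have hR0 : (0:ℝ) < R := lt_of_lt_of_le one_pos hR
  have h1 : |x ^ e| ≤ R ^ (2 * j) := by
    rw [abs_pow]
    calc |x| ^ e ≤ R ^ e := pow_le_pow_left₀ (abs_nonneg x) hx e
      _ ≤ R ^ (2 * j) := pow_le_pow_right₀ hR he
  have h2 : |a j * (c:ℝ)| ≤ ((j:ℝ)+1)^3 / (Nat.factorial j : ℝ) := by
    rw [abs_mul]
    have hc0 : (0:ℝ) ≤ (c:ℝ) := Nat.cast_nonneg c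
    rw [abs_of_nonneg hc0]
    calc |a j| * (c:ℝ) ≤ (1 / (Nat.factorial j : ℝ)) * ((j:ℝ)+1)^3 := by
          apply mul_le_mul (abs_a_le j) hc hc0 (by positivity)
      _ = ((j:ℝ)+1)^3 / (Nat.factorial j : ℝ) := by ring
  calc |a j * (c:ℝ) * x ^ e| = |a j * (c:ℝ)| * |x ^ e| := abs_mul _ _
    _ ≤ (((j:ℝ)+1)^3 / (Nat.factorial j : ℝ)) * R ^ (2*j) := by
        apply mul_le_mul h2 h1 (abs_nonneg _) (by positivity)
    _ = maj R j := by rw [maj, pow_mul]; ring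

lemma bound_T0 {R x : ℝ} (hR : 1 ≤ R) (hx : |x| ≤ R) (j : ℕ) : |T0 j x| ≤ maj R j := by
  have := bound_core hR hx j 1 (2*j) le_rfl (by
    have hj : (0:ℝ) ≤ (j:ℝ) := Nat.cast_nonneg j
    push_cast; nlinarith [hj, mul_nonneg hj hj, mul_nonneg (mul_nonneg hj hj) hj])
  simpa [T0] using this

lemma bound_T1 {R x : ℝ} (hR : 1 ≤ R) (hx : |x| ≤ R) (j : ℕ) : |T1 j x| ≤ maj R j := by
  have := bound_core hR hx j (2*j) (2*j-1) (Nat.sub_le _ _) (by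
    have hj : (0:ℝ) ≤ (j:ℝ) := Nat.cast_nonneg j
    push_cast; nlinarith [hj, mul_nonneg hj hj, mul_nonneg (mul_nonneg hj hj) hj])
  simpa [T1] using this

lemma bound_T2 {R x : ℝ} (hR : 1 ≤ R) (hx : |x| ≤ R) (j : ℕ) : |T2 j x| ≤ maj R j := by
  have hc : ((2*j) * (2*j-1) : ℕ) ≤ (((j:ℝ)+1)^3 : ℝ) := by
    have h1 : ((2*j-1 : ℕ) : ℝ) ≤ 2*(j:ℝ) := by
      have := Nat.sub_le (2*j) 1
      calc ((2*j-1 : ℕ) : ℝ) ≤ ((2*j : ℕ) : ℝ) := by exact_mod_cast this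
        _ = 2*(j:ℝ) := by push_cast; ring
    have hj : (0:ℝ) ≤ (j:ℝ) := Nat.cast_nonneg j
    have h0 : (0:ℝ) ≤ ((2*j-1 : ℕ):ℝ) := Nat.cast_nonneg _
    push_cast
    nlinarith [hj, h1, h0, mul_nonneg hj (sq_nonneg ((j:ℝ)-1))]
  have := bound_core hR hx j ((2*j) * (2*j-1)) (2*j-1-1)
    (le_trans (Nat.sub_le _ _) (Nat.sub_le _ _)) hc
  have heq : ∀ y : ℝ, a j * (((2*j) * (2*j-1) : ℕ) : ℝ) * y = a j * ((2*j : ℕ):ℝ) * (((2*j-1:ℕ)):ℝ) * y := by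
    intro y; push_cast; try ring
  rw [T2]; rw [heq (x ^ (2*j-1-1))] at this; exact this

lemma summable_T0 (x : ℝ) : Summable (fun j => T0 j x) :=
  Summable.of_norm_bounded (summable_maj (|x|+1)) (fun j => bound_T0 (by linarith [abs_nonneg x]) (by linarith [abs_nonneg x]) j)

lemma summable_T1 (x : ℝ) : Summable (fun j => T1 j x) :=
  Summable.of_norm_bounded (summable_maj (|x|+1)) (fun j => bound_T1 (by linarith [abs_nonneg x]) (by linarith [abs_nonneg x]) j)

lemma summable_T2 (x : ℝ) : Summable (fun j => T2 j x) :=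
  Summable.of_norm_bounded (summable_maj (|x|+1)) (fun j => bound_T2 (by linarith [abs_nonneg x]) (by linarith [abs_nonneg x]) j)

-- termwise derivatives
lemma hasDerivAt_T0 (j : ℕ) (x : ℝ) : HasDerivAt (fun y => T0 j y) (T1 j x) x := by
  have h := (hasDerivAt_pow (2*j) x).const_mul (a j)
  simpa [T0, T1, mul_assoc] using h

lemma hasDerivAt_T1 (j : ℕ) (x : ℝ) : HasDerivAt (fun y => T1 j y) (T2 j x) x := by
  have h := (hasDerivAt_pow (2*j-1) x).const_mul (a j * ((2*j : ℕ):ℝ))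
  simpa [T1, T2, mul_assoc] using h

lemma hasDerivAt_J0s (x : ℝ) : HasDerivAt (fun y => ∑' j, T0 j y) (J0d x) x := by
  have hR : (1:ℝ) ≤ |x| + 1 := by linarith [abs_nonneg x]
  set R := |x| + 1 with hRdef
  have hball : x ∈ Metric.ball (0:ℝ) R := by simp [Real.norm_eq_abs]; linarith [abs_nonneg x]
  refine hasDerivAt_of_tendstoUniformlyOn (Metric.isOpen_ball)
    (tendstoUniformlyOn_tsum_nat (summable_maj R) (fun j y hy => ?_))
    (Eventually.of_forall (fun N y _ => HasDerivAt.fun_sum (fun j _ => hasDerivAt_T0 j y)))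
    (fun y _ => (summable_T0 y).hasSum.tendsto_sum_nat) hball
  · exact bound_T1 hR (le_of_lt (by simpa [Real.norm_eq_abs] using hy)) j

lemma hasDerivAt_J0d (x : ℝ) : HasDerivAt J0d (J0dd x) x := by
  have hR : (1:ℝ) ≤ |x| + 1 := by linarith [abs_nonneg x]
  set R := |x| + 1 with hRdef
  have hball : x ∈ Metric.ball (0:ℝ) R := by simp [Real.norm_eq_abs]; linarith [abs_nonneg x]
  refine hasDerivAt_of_tendstoUniformlyOn (Metric.isOpen_ball)
    (tendstoUniformlyOn_tsum_nat (summable_maj R) (fun j y hy => ?_))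
    (Eventually.of_forall (fun N y _ => HasDerivAt.fun_sum (fun j _ => hasDerivAt_T1 j y)))
    (fun y _ => (summable_T1 y).hasSum.tendsto_sum_nat) hball
  · exact bound_T2 hR (le_of_lt (by simpa [Real.norm_eq_abs] using hy)) j

lemma J0_eq_tsum (x : ℝ) : J0 x = ∑' j, T0 j x := by
  rw [J0]
  apply tsum_congr
  intro j
  rw [T0, a, div_pow]
  have : (2:ℝ) ^ (2 * j) = 4 ^ j := by
    rw [pow_mul]; norm_num
  rw [this]
  have h4 : (4:ℝ) ^ j ≠ 0 := by positivity
  have hf : ((Nat.factorial j : ℝ))^2 ≠ 0 := by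
    have := Nat.factorial_pos j; positivity
  field_simp

lemma hasDerivAt_J0 (x : ℝ) : HasDerivAt J0 (J0d x) x := by
  have h := hasDerivAt_J0s x
  have : J0 = fun y => ∑' j, T0 j y := funext J0_eq_tsum
  rw [this]; exact h


lemma a_succ (j : ℕ) : a (j+1) = -a j / (4 * ((j:ℝ)+1)^2) := by
  rw [a, a, Nat.factorial_succ]
  have hf : ((Nat.factorial j : ℝ)) ≠ 0 := by
    exact_mod_cast Nat.factorial_ne_zero j
  have h4 : (4:ℝ) ^ j ≠ 0 := by positivity
  have hj : ((j:ℝ)+1) ≠ 0 := by positivity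
  push_cast
  field_simp
  ring

lemma J0_ODE (x : ℝ) : x * J0dd x + J0d x + x * J0 x = 0 := by
  have hsum2 : Summable (fun j => x * T2 j x) := (summable_T2 x).mul_left x
  have hsum1 := summable_T1 x
  have hsumf : Summable (fun j => x * T2 j x + T1 j x) := hsum2.add hsum1
  have h2 : x * J0dd x = ∑' j, x * T2 j x := by rw [J0dd, tsum_mul_left]
  have h1 : x * J0dd x + J0d x = ∑' j, (x * T2 j x + T1 j x) := by
    rw [h2, J0d, Summable.tsum_add hsum2 hsum1]
  have hf0 : x * T2 0 x + T1 0 x = 0 := by simp [T1, T2]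
  have hshift : ∑' j, (x * T2 j x + T1 j x)
      = ∑' j, (x * T2 (j+1) x + T1 (j+1) x) := by
    rw [Summable.tsum_eq_zero_add hsumf, hf0, zero_add]
  have hterm : ∀ j : ℕ, x * T2 (j+1) x + T1 (j+1) x = -(x * T0 j x) := by
    intro j
    have e1 : 2 * (j+1) - 1 = 2*j + 1 := by omega
    have e2 : 2 * (j+1) - 1 - 1 = 2*j := by omega
    rw [T2, T1, T0, e2, e1, a_succ]
    have hj : ((j:ℝ)+1) ≠ 0 := by positivity
    push_cast
    field_simp
    ring
  have hneg : ∑' j, (x * T2 (j+1) x + T1 (j+1) x) = -(x * J0 x) := by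
    simp_rw [hterm]
    rw [tsum_neg, J0_eq_tsum, tsum_mul_left]
  linarith [h1.trans (hshift.trans hneg)]

lemma J0_zero : J0 0 = 1 := by
  rw [J0]
  rw [tsum_eq_single 0]
  · norm_num
  · intro j hj
    have : ((0:ℝ)/2) ^ (2*j) = 0 := by
      rw [zero_div, zero_pow (by omega : 2*j ≠ 0)]
    rw [this, mul_zero]

lemma contJ0 : Continuous J0 := by
  rw [continuous_iff_continuousAt]
  exact fun x => (hasDerivAt_J0 x).differentiableAt.continuousAt

lemma contJ0d : Continuous J0d := by
  rw [continuous_iff_continuousAt]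
  exact fun x => (hasDerivAt_J0d x).differentiableAt.continuousAt


noncomputable def w (x : ℝ) : ℝ := Real.sqrt x * J0 x
noncomputable def w1 (x : ℝ) : ℝ := J0 x / (2 * Real.sqrt x) + Real.sqrt x * J0d x

lemma hasDerivAt_w {x : ℝ} (hx : 0 < x) : HasDerivAt w (w1 x) x := by
  have h := (Real.hasDerivAt_sqrt hx.ne').mul (hasDerivAt_J0 x)
  have : 1 / (2 * Real.sqrt x) * J0 x + Real.sqrt x * J0d x = w1 x := by
    rw [w1]; ring
  rw [← this]; exact h

lemma alg1 (s x A B C : ℝ) (hs : 0 < s) (hss : s * s = x)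
    (hC : C = (-B - x*A)/x) :
    (B * (2 * s) - A * (2 * (1 / (2 * s)))) / (2 * s)^2
      + (1 / (2 * s) * B + s * C) = -(1 + 1/(4*x^2)) * (s * A) := by
  subst hss
  have hs0 : s ≠ 0 := ne_of_gt hs
  rw [hC]
  field_simp
  ring

lemma hasDerivAt_w1 {x : ℝ} (hx : 0 < x) :
    HasDerivAt w1 (-(1 + 1/(4*x^2)) * w x) x := by
  have hs0 : Real.sqrt x ≠ 0 := by
    positivity
  have hg : HasDerivAt (fun y => 2 * Real.sqrt y) (2 * (1 / (2 * Real.sqrt x))) x :=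
    (Real.hasDerivAt_sqrt hx.ne').const_mul 2
  have h1 : HasDerivAt (fun y => J0 y / (2 * Real.sqrt y))
      ((J0d x * (2 * Real.sqrt x) - J0 x * (2 * (1 / (2 * Real.sqrt x)))) / (2 * Real.sqrt x)^2) x :=
    (hasDerivAt_J0 x).div hg (by positivity)
  have h2 : HasDerivAt (fun y => Real.sqrt y * J0d y)
      (1 / (2 * Real.sqrt x) * J0d x + Real.sqrt x * J0dd x) x :=
    (Real.hasDerivAt_sqrt hx.ne').mul (hasDerivAt_J0d x)
  have h := h1.add h2
  have heq : (J0d x * (2 * Real.sqrt x) - J0 x * (2 * (1 / (2 * Real.sqrt x)))) / (2 * Real.sqrt x)^2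
      + (1 / (2 * Real.sqrt x) * J0d x + Real.sqrt x * J0dd x)
      = -(1 + 1/(4*x^2)) * w x := by
    have hdd : J0dd x = (-(J0d x) - x * J0 x)/x := by
      have := J0_ODE x
      field_simp
      linarith
    rw [w]
    exact alg1 (Real.sqrt x) x (J0 x) (J0d x) (J0dd x)
      (Real.sqrt_pos.mpr hx) (Real.mul_self_sqrt hx.le) hdd
  rw [← heq]
  exact h

/-- Sturm-type nonoscillation contradiction: if `w, w1` solve `w' = w1`, `w1' = -(1+1/(4x²)) w`
    on positive reals and `w > 0` on `(a, a+π]` with `a > 0`, contradiction. -/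
lemma sturm_upper {a : ℝ} (ha : 0 < a) (W W1 : ℝ → ℝ)
    (hd : ∀ x, 0 < x → HasDerivAt W (W1 x) x)
    (hd1 : ∀ x, 0 < x → HasDerivAt W1 (-(1 + 1/(4*x^2)) * W x) x)
    (hpos : ∀ x ∈ Set.Ioc a (a + π), 0 < W x) : False := by
  have hpi := Real.pi_pos
  set V : ℝ → ℝ := fun x => W x * Real.cos (x - a) - W1 x * Real.sin (x - a) with hV
  have hVd : ∀ x, 0 < x → HasDerivAt V (1/(4*x^2) * W x * Real.sin (x - a)) x := by
    intro x hx
    have hsin : HasDerivAt (fun y : ℝ => Real.sin (y - a)) (Real.cos (x - a)) x := by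
      simpa [Function.comp_def] using (Real.hasDerivAt_sin (x - a)).comp x ((hasDerivAt_id x).sub_const a)
    have hcos : HasDerivAt (fun y : ℝ => Real.cos (y - a)) (-Real.sin (x - a)) x := by
      simpa [Function.comp_def] using (Real.hasDerivAt_cos (x - a)).comp x ((hasDerivAt_id x).sub_const a)
    have h := ((hd x hx).mul hcos).sub ((hd1 x hx).mul hsin)
    have heq : W1 x * Real.cos (x - a) + W x * -Real.sin (x - a)
        - (-(1 + 1/(4*x^2)) * W x * Real.sin (x - a) + W1 x * Real.cos (x - a))
        = 1/(4*x^2) * W x * Real.sin (x - a) := by ring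
    rw [← heq]; exact h
  have hmono : StrictMonoOn V (Set.Icc a (a + π)) := by
    apply strictMonoOn_of_deriv_pos (convex_Icc _ _)
    · apply ContinuousOn.mono _ (fun x hx => hx)
      intro x hx
      exact ((hVd x (lt_of_lt_of_le ha hx.1)).continuousAt).continuousWithinAt
    · intro x hx
      rw [interior_Icc] at hx
      have hx0 : 0 < x := lt_trans ha hx.1
      rw [(hVd x hx0).deriv]
      have hW : 0 < W x := hpos x ⟨hx.1, hx.2.le⟩
      have hs : 0 < Real.sin (x - a) :=
        Real.sin_pos_of_pos_of_lt_pi (by linarith [hx.1]) (by linarith [hx.2])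
      positivity
  have hWa : 0 ≤ W a := by
    have hcont : Tendsto W (nhdsWithin a (Set.Ioi a)) (nhds (W a)) :=
      ((hd a ha).continuousAt).continuousWithinAt
    have hev : ∀ᶠ x in nhdsWithin a (Set.Ioi a), 0 ≤ W x := by
      filter_upwards [Ioc_mem_nhdsGT_of_mem (⟨le_refl a, by linarith⟩ : a ∈ Set.Ico a (a + π))]
        with x hx using (hpos x hx).le
    exact ge_of_tendsto hcont hev
  have hlt : V a < V (a + π) :=
    hmono ⟨le_refl a, by linarith⟩ ⟨by linarith, le_refl _⟩ (by linarith)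
  have hVa : V a = W a := by simp [hV]
  have hVb : V (a + π) = -W (a + π) := by
    simp [hV]
  have hWb : 0 < W (a + π) := hpos _ ⟨by linarith, le_refl _⟩
  rw [hVa, hVb] at hlt
  linarith


lemma sturm_lower {a b : ℝ} (ha : 0 < a) (hab : a < b) (W W1 : ℝ → ℝ)
    (hd : ∀ x, 0 < x → HasDerivAt W (W1 x) x)
    (hd1 : ∀ x, 0 < x → HasDerivAt W1 (-(1 + 1/(4*x^2)) * W x) x)
    (hWa : W a = 0) (hWb : W b = 0)
    (hpos : ∀ x ∈ Set.Ioo a b, 0 < W x)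
    (hblt : b < a + π / Real.sqrt (1 + 1/(4*a^2))) : False := by
  have hpi := Real.pi_pos
  set ω := Real.sqrt (1 + 1/(4*a^2)) with hω
  have hω1 : (1:ℝ) ≤ ω := by
    rw [hω]
    rw [show (1:ℝ) = Real.sqrt 1 by simp]
    apply Real.sqrt_le_sqrt
    have : 0 < 1/(4*a^2) := by positivity
    simp
    positivity
  have hω0 : 0 < ω := lt_of_lt_of_le one_pos hω1
  have hω2 : ω^2 = 1 + 1/(4*a^2) := Real.sq_sqrt (by positivity)
  have hba : b - a < π / ω := by linarith
  have hbaπ : ω * (b - a) < π := by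
    rw [← lt_div_iff₀' hω0]; exact hba
  set V : ℝ → ℝ := fun x => W x * (ω * Real.cos (ω*(x - a))) - W1 x * Real.sin (ω*(x - a)) with hV
  have hVd : ∀ x, 0 < x → HasDerivAt V
      ((1/(4*x^2) - 1/(4*a^2)) * W x * Real.sin (ω*(x - a))) x := by
    intro x hx
    have hin : HasDerivAt (fun y : ℝ => ω*(y - a)) ω x := by
      simpa using ((hasDerivAt_id x).sub_const a).const_mul ω
    have hsin : HasDerivAt (fun y : ℝ => Real.sin (ω*(y - a))) (Real.cos (ω*(x - a)) * ω) x :=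
      hin.sin
    have hcos : HasDerivAt (fun y : ℝ => ω * Real.cos (ω*(y - a))) (ω * (-Real.sin (ω*(x - a)) * ω)) x :=
      hin.cos.const_mul ω
    have h := ((hd x hx).mul hcos).sub ((hd1 x hx).mul hsin)
    have heq : W1 x * (ω * Real.cos (ω*(x - a))) + W x * (ω * (-Real.sin (ω*(x - a)) * ω))
        - (-(1 + 1/(4*x^2)) * W x * Real.sin (ω*(x - a)) + W1 x * (Real.cos (ω*(x - a)) * ω))
        = (1/(4*x^2) - 1/(4*a^2)) * W x * Real.sin (ω*(x - a)) := by
      have h2 : ω * ω = 1 + 1/(4*a^2) := by nlinarith [hω2]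
      linear_combination (-(W x * Real.sin (ω*(x - a)))) * h2
    rw [← heq]; exact h
  have hanti : StrictAntiOn V (Set.Icc a b) := by
    apply strictAntiOn_of_deriv_neg (convex_Icc _ _)
    · intro x hx
      exact ((hVd x (lt_of_lt_of_le ha hx.1)).continuousAt).continuousWithinAt
    · intro x hx
      rw [interior_Icc] at hx
      have hx0 : 0 < x := lt_trans ha hx.1
      rw [(hVd x hx0).deriv]
      have hW : 0 < W x := hpos x hx
      have hs : 0 < Real.sin (ω*(x - a)) := by
        apply Real.sin_pos_of_pos_of_lt_pi
        · have : 0 < x - a := by linarith [hx.1]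
          positivity
        · have h1 : ω * (x - a) < ω * (b - a) := by
            apply mul_lt_mul_of_pos_left _ hω0
            linarith [hx.2]
          linarith
      have hneg : 1/(4*x^2) - 1/(4*a^2) < 0 := by
        have h2 : a^2 < x^2 := by nlinarith [hx.1]
        have : 1/(4*x^2) < 1/(4*a^2) := by
          apply one_div_lt_one_div_of_lt (by positivity)
          nlinarith
        linarith
      have := mul_pos hW hs
      nlinarith
  have hVa : V a = 0 := by simp [hV, hWa]
  have hVb : V b = -W1 b * Real.sin (ω*(b - a)) := by simp [hV, hWb]
  have hsb : 0 < Real.sin (ω*(b - a)) := by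
    apply Real.sin_pos_of_pos_of_lt_pi
    · have : 0 < b - a := by linarith
      positivity
    · exact hbaπ
  have hlt : V b < V a :=
    hanti ⟨le_refl a, hab.le⟩ ⟨hab.le, le_refl b⟩ hab
  rw [hVa, hVb] at hlt
  have hW1b : 0 < W1 b := by
    by_contra h
    push_neg at h
    nlinarith
  -- slope argument: W1 b ≤ 0
  have hslope : W1 b ≤ 0 := by
    have htend : Tendsto (slope W b) (nhdsWithin b {b}ᶜ) (nhds (W1 b)) :=
      hasDerivAt_iff_tendsto_slope.mp (hd b (lt_trans ha hab))
    have htend' : Tendsto (slope W b) (nhdsWithin b (Set.Iio b)) (nhds (W1 b)) :=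
      htend.mono_left (nhdsWithin_mono b (fun y hy => ne_of_lt hy))
    apply le_of_tendsto htend'
    filter_upwards [Ioo_mem_nhdsLT_of_mem (⟨hab, le_refl b⟩ : b ∈ Set.Ioc a b)] with y hy
    rw [slope_def_field]
    have h1 : 0 < W y := hpos y hy
    have h2 : y - b < 0 := by linarith [hy.2]
    rw [hWb]
    have : (W y - 0) / (y - b) ≤ 0 := div_nonpos_of_nonneg_of_nonpos (by linarith) h2.le
    simpa using this
  linarith

lemma cont_w : Continuous w := Real.continuous_sqrt.mul contJ0

lemma dichotomy {S : Set ℝ} (hS : Set.OrdConnected S) {f : ℝ → ℝ} (hcont : Continuous f)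
    (hne : ∀ x ∈ S, f x ≠ 0) :
    (∀ x ∈ S, 0 < f x) ∨ (∀ x ∈ S, f x < 0) := by
  by_cases hall : ∀ x ∈ S, 0 < f x
  · exact Or.inl hall
  · right
    push_neg at hall
    obtain ⟨x₁, hx₁S, hx₁⟩ := hall
    have hx₁' : f x₁ < 0 := lt_of_le_of_ne hx₁ (hne x₁ hx₁S)
    intro x₂ hx₂S
    by_contra h
    push_neg at h
    have hx₂' : 0 < f x₂ := lt_of_le_of_ne h (Ne.symm (hne x₂ hx₂S))
    have hsub : Set.uIcc x₁ x₂ ⊆ S := hS.uIcc_subset hx₁S hx₂S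
    have h0 : (0:ℝ) ∈ Set.uIcc (f x₁) (f x₂) := by
      rw [Set.mem_uIcc]
      left; exact ⟨hx₁'.le, hx₂'.le⟩
    obtain ⟨c, hc, hfc⟩ := intermediate_value_uIcc (hcont.continuousOn) h0
    exact hne c (hsub hc) hfc

lemma neg_deriv_system :
    (∀ x, 0 < x → HasDerivAt (fun y => -w y) (-(w1 x)) x) ∧
    (∀ x, 0 < x → HasDerivAt (fun y => -(w1 y)) (-(1 + 1/(4*x^2)) * (-(w x))) x) := by
  constructor
  · intro x hx; exact (hasDerivAt_w hx).neg
  · intro x hx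
    have h := (hasDerivAt_w1 hx).neg
    have : -(-(1 + 1/(4*x^2)) * w x) = -(1 + 1/(4*x^2)) * (-(w x)) := by ring
    rw [← this]; exact h

lemma exists_zero_Ioc {a : ℝ} (ha : 0 < a) : ∃ x ∈ Set.Ioc a (a + π), J0 x = 0 := by
  by_contra h
  push_neg at h
  have hwne : ∀ x ∈ Set.Ioc a (a + π), w x ≠ 0 := by
    intro x hx
    have hx0 : 0 < x := lt_trans ha hx.1
    rw [w]
    exact mul_ne_zero (by positivity) (h x hx)
  rcases dichotomy Set.ordConnected_Ioc cont_w hwne with hp | hn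
  · exact sturm_upper ha w w1 (fun x hx => hasDerivAt_w hx) (fun x hx => hasDerivAt_w1 hx) hp
  · exact sturm_upper ha (fun y => -w y) (fun y => -(w1 y)) neg_deriv_system.1 neg_deriv_system.2
      (fun x hx => by simpa using hn x hx)

lemma gap_lower {a b : ℝ} (ha : 0 < a) (hab : a < b) (hJa : J0 a = 0) (hJb : J0 b = 0)
    (hno : ∀ x ∈ Set.Ioo a b, J0 x ≠ 0) :
    a + π / Real.sqrt (1 + 1/(4*a^2)) ≤ b := by
  by_contra h
  push_neg at h
  have hwa : w a = 0 := by rw [w, hJa, mul_zero]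
  have hwb : w b = 0 := by rw [w, hJb, mul_zero]
  have hwne : ∀ x ∈ Set.Ioo a b, w x ≠ 0 := by
    intro x hx
    have hx0 : 0 < x := lt_trans ha hx.1
    rw [w]
    exact mul_ne_zero (by positivity) (hno x hx)
  rcases dichotomy Set.ordConnected_Ioo cont_w hwne with hp | hn
  · exact sturm_lower ha hab w w1 (fun x hx => hasDerivAt_w hx) (fun x hx => hasDerivAt_w1 hx)
      hwa hwb hp h
  · exact sturm_lower ha hab (fun y => -w y) (fun y => -(w1 y)) neg_deriv_system.1
      neg_deriv_system.2 (by simp [hwa]) (by simp [hwb]) (fun x hx => by simpa using hn x hx) h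

lemma cont_u (c : ℝ) : Continuous (fun r => J0 (c * r)) :=
  contJ0.comp (continuous_const.mul continuous_id)

lemma cont_ud (c : ℝ) : Continuous (fun r => c * J0d (c * r)) :=
  continuous_const.mul (contJ0d.comp (continuous_const.mul continuous_id))

lemma hasDerivAt_u (c r : ℝ) : HasDerivAt (fun y => J0 (c * y)) (c * J0d (c * r)) r := by
  have hin : HasDerivAt (fun y : ℝ => c * y) c r := by
    simpa using (hasDerivAt_id r).const_mul c
  have := (hasDerivAt_J0 (c * r)).comp r hin
  simpa [mul_comm, Function.comp_def] using this

lemma hasDerivAt_ud (c r : ℝ) :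
    HasDerivAt (fun y => c * J0d (c * y)) (c^2 * J0dd (c * r)) r := by
  have hin : HasDerivAt (fun y : ℝ => c * y) c r := by
    simpa using (hasDerivAt_id r).const_mul c
  have := ((hasDerivAt_J0d (c * r)).comp r hin).const_mul c
  have heq : c * (J0dd (c * r) * c) = c^2 * J0dd (c * r) := by ring
  rw [heq] at this
  exact this

lemma key_integral {c : ℝ} (hc : J0 c = 0) :
    (∫ r in (0:ℝ)..1, (c * J0d (c * r))^2 * r)
      = c^2 * ∫ r in (0:ℝ)..1, (J0 (c * r))^2 * r := by
  set G : ℝ → ℝ := fun r => r * (J0 (c * r) * (c * J0d (c * r))) with hG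
  have hGd : ∀ r : ℝ, HasDerivAt G
      ((c * J0d (c * r))^2 * r - c^2 * ((J0 (c * r))^2 * r)) r := by
    intro r
    have h := (hasDerivAt_id r).mul ((hasDerivAt_u c r).mul (hasDerivAt_ud c r))
    have heq : 1 * (J0 (c * r) * (c * J0d (c * r)))
        + r * (c * J0d (c * r) * (c * J0d (c * r)) + J0 (c * r) * (c^2 * J0dd (c * r)))
        = (c * J0d (c * r))^2 * r - c^2 * ((J0 (c * r))^2 * r) := by
      linear_combination (c * J0 (c * r)) * J0_ODE (c * r)
    rw [← heq]
    exact h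
  have hcont : Continuous (fun r => (c * J0d (c * r))^2 * r - c^2 * ((J0 (c * r))^2 * r)) := by
    apply Continuous.sub
    · exact ((cont_ud c).pow 2).mul continuous_id
    · exact continuous_const.mul (((cont_u c).pow 2).mul continuous_id)
  have hint := intervalIntegral.integral_eq_sub_of_hasDerivAt
    (fun r _ => hGd r) (hcont.intervalIntegrable 0 1)
  have hG1 : G 1 = 0 := by simp [hG, hc]
  have hG0 : G 0 = 0 := by simp [hG]
  rw [hG1, hG0, sub_zero] at hint
  have hi1 : IntervalIntegrable (fun r => (c * J0d (c * r))^2 * r) MeasureTheory.volume 0 1 :=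
    (((cont_ud c).pow 2).mul continuous_id).intervalIntegrable 0 1
  have hi2 : IntervalIntegrable (fun r => c^2 * ((J0 (c * r))^2 * r)) MeasureTheory.volume 0 1 :=
    (continuous_const.mul (((cont_u c).pow 2).mul continuous_id)).intervalIntegrable 0 1
  rw [intervalIntegral.integral_sub hi1 hi2] at hint
  have := sub_eq_zero.mp hint
  rw [this, intervalIntegral.integral_const_mul]

lemma I2_pos (c : ℝ) : 0 < ∫ r in (0:ℝ)..1, (J0 (c * r))^2 * r := by
  set u : ℝ → ℝ := fun r => J0 (c * r) with hu
  have hcont : Continuous u := cont_u c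
  have hu0 : u 0 = 1 := by simp [hu, J0_zero]
  have hca : ContinuousAt u 0 := hcont.continuousAt
  rw [Metric.continuousAt_iff] at hca
  obtain ⟨ε, hε, hball⟩ := hca (1/2) (by norm_num)
  set δ : ℝ := min (ε/2) 1 with hδ
  have hδ0 : 0 < δ := by
    apply lt_min (by linarith) one_pos
  have hδ1 : δ ≤ 1 := min_le_right _ _
  have hularge : ∀ y ∈ Set.Icc (0:ℝ) δ, 1/2 ≤ u y := by
    intro y hy
    have : dist y 0 < ε := by
      rw [Real.dist_eq, sub_zero, abs_of_nonneg hy.1]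
      have := hy.2
      have : y ≤ ε/2 := le_trans this (min_le_left _ _)
      linarith
    have hd := hball this
    rw [Real.dist_eq, hu0] at hd
    have := abs_lt.mp hd
    linarith [this.1]
  have hi1 : IntervalIntegrable (fun r => (u r)^2 * r) MeasureTheory.volume 0 δ :=
    (((hcont.pow 2)).mul continuous_id).intervalIntegrable 0 δ
  have hi1' : IntervalIntegrable (fun r => (u r)^2 * r) MeasureTheory.volume δ 1 :=
    (((hcont.pow 2)).mul continuous_id).intervalIntegrable δ 1
  have hadd : (∫ r in (0:ℝ)..δ, (u r)^2 * r) + (∫ r in δ..1, (u r)^2 * r)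
      = ∫ r in (0:ℝ)..1, (u r)^2 * r :=
    intervalIntegral.integral_add_adjacent_intervals hi1 hi1'
  have hlow : (∫ r in (0:ℝ)..δ, (1/4) * r) ≤ ∫ r in (0:ℝ)..δ, (u r)^2 * r := by
    apply intervalIntegral.integral_mono_on hδ0.le
      ((continuous_const.mul continuous_id).intervalIntegrable 0 δ) hi1
    intro y hy
    have h12 : 1/2 ≤ u y := hularge y hy
    have hy0 : 0 ≤ y := hy.1
    simp only [Pi.mul_apply, id_eq]
    nlinarith [mul_nonneg (mul_nonneg (by linarith : (0:ℝ) ≤ u y - 1/2)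
      (by linarith : (0:ℝ) ≤ u y + 1/2)) hy0]
  have hval : (∫ r in (0:ℝ)..δ, (1/4) * r) = δ^2/8 := by
    rw [intervalIntegral.integral_const_mul, integral_id]
    ring
  have hpos2 : 0 ≤ ∫ r in δ..1, (u r)^2 * r := by
    apply intervalIntegral.integral_nonneg hδ1
    intro y hy
    have hy0 : (0:ℝ) ≤ y := le_trans hδ0.le hy.1
    positivity
  have : 0 < δ^2/8 := by positivity
  linarith [hadd, hlow, hval, hpos2]

lemma deriv_J0_eq : deriv J0 = J0d := funext fun x => (hasDerivAt_J0 x).deriv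

lemma norm_eq {z : ℕ → ℝ} {n : ℕ} (hc0 : 0 < z n) (hJc : J0 (z n) = 0) :
    Real.sqrt (2 * Real.pi * ∫ r in (0 : ℝ)..1, (efun' z n r) ^ 2 * r) = z n := by
  have hpi := Real.pi_pos
  set c := z n with hcdef
  set I2 := ∫ r in (0:ℝ)..1, (J0 (c * r)) ^ 2 * r with hI2def
  have hI2 : 0 < I2 := I2_pos c
  have hBsq : (besselL2 z n)^2 = 2 * Real.pi * I2 := by
    rw [besselL2, Real.sq_sqrt (by positivity)]
  have hB0 : 0 < besselL2 z n := by
    rw [besselL2]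
    apply Real.sqrt_pos.mpr
    positivity
  set B := besselL2 z n with hBdef
  have hpt : (fun r => (efun' z n r) ^ 2 * r)
      = fun r => (1/B^2) * ((c * J0d (c * r))^2 * r) := by
    funext r
    rw [efun', deriv_J0_eq, ← hcdef, ← hBdef]
    field_simp
  have hval : (∫ r in (0:ℝ)..1, (efun' z n r) ^ 2 * r) = (1/B^2) * (c^2 * I2) := by
    rw [hpt, intervalIntegral.integral_const_mul, key_integral hJc]
  have hfinal : 2 * Real.pi * ∫ r in (0:ℝ)..1, (efun' z n r) ^ 2 * r = c^2 := by
    rw [hval, hBsq]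
    field_simp
  rw [hfinal]
  exact Real.sqrt_sq hc0.le


end Bes

open Bes in
/-- Two-sided bound `C₁ n ≤ ‖e_n′‖_{L²(Θ)} ≤ C₂ n`. -/
theorem eigenfunction_deriv_L2_equiv
    (z : ℕ → ℝ)
    (hzpos : ∀ n, 1 ≤ n → 0 < z n)
    (hzmono : ∀ m n, 1 ≤ m → m < n → z m < z n)
    (hzzero : ∀ n, 1 ≤ n → J0 (z n) = 0)
    (hzall : ∀ x : ℝ, 0 < x → J0 x = 0 → ∃ n, 1 ≤ n ∧ z n = x) :
    ∃ C₁ : ℝ, 0 < C₁ ∧ ∃ C₂ : ℝ, 0 < C₂ ∧ ∀ n : ℕ, 1 ≤ n →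
      C₁ * (n : ℝ) ≤ Real.sqrt (2 * Real.pi * ∫ r in (0 : ℝ)..1, (efun' z n r) ^ 2 * r) ∧
      Real.sqrt (2 * Real.pi * ∫ r in (0 : ℝ)..1, (efun' z n r) ^ 2 * r) ≤ C₂ * (n : ℝ) := by
  have hpi := Real.pi_pos
  have hzmono' : ∀ m n, 1 ≤ m → m ≤ n → z m ≤ z n := by
    intro m n hm hmn
    rcases eq_or_lt_of_le hmn with h | h
    · rw [h]
    · exact (hzmono m n hm h).le
  -- upper bound on z n
  have hub : ∀ n : ℕ, 1 ≤ n → z n ≤ 1 + π * n := by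
    intro n hn
    induction n, hn using Nat.le_induction with
    | base =>
      obtain ⟨x, hx, hJx⟩ := exists_zero_Ioc one_pos
      obtain ⟨m, hm, hzm⟩ := hzall x (by linarith [hx.1]) hJx
      have : z 1 ≤ z m := hzmono' 1 m le_rfl hm
      rw [hzm] at this
      push_cast
      linarith [hx.2]
    | succ n hn ih =>
      obtain ⟨x, hx, hJx⟩ := exists_zero_Ioc (hzpos n hn)
      obtain ⟨m, hm, hzm⟩ := hzall x (lt_trans (hzpos n hn) hx.1) hJx
      have hnm : n < m := by
        by_contra h
        push_neg at h
        have := hzmono' m n hm h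
        rw [hzm] at this
        linarith [hx.1]
      have h1 : z (n+1) ≤ z m := hzmono' (n+1) m (by omega) (by omega)
      rw [hzm] at h1
      push_cast
      push_cast at ih
      linarith [hx.2, h1]
  -- lower bound on z n
  set δ : ℝ := π / Real.sqrt (1 + 1/(4*(z 1)^2)) with hδdef
  have hz1 : 0 < z 1 := hzpos 1 le_rfl
  have hδ0 : 0 < δ := by
    rw [hδdef]
    positivity
  have hlb : ∀ n : ℕ, 1 ≤ n → z 1 + ((n:ℝ) - 1) * δ ≤ z n := by
    intro n hn
    induction n, hn using Nat.le_induction with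
    | base => norm_num
    | succ n hn ih =>
      have hzn : 0 < z n := hzpos n hn
      have hlt : z n < z (n+1) := hzmono n (n+1) hn (by omega)
      have hno : ∀ x ∈ Set.Ioo (z n) (z (n+1)), J0 x ≠ 0 := by
        intro x hx hJx
        obtain ⟨m, hm, hzm⟩ := hzall x (lt_trans hzn hx.1) hJx
        rcases le_or_gt m n with h | h
        · have := hzmono' m n hm h
          rw [hzm] at this
          linarith [hx.1]
        · have := hzmono' (n+1) m (by omega) (by omega)
          rw [hzm] at this
          linarith [hx.2]
      have hgap := gap_lower hzn hlt (hzzero n hn) (hzzero (n+1) (by omega)) hno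
      have hδle : δ ≤ π / Real.sqrt (1 + 1/(4*(z n)^2)) := by
        rw [hδdef]
        have hz1n : z 1 ≤ z n := hzmono' 1 n le_rfl hn
        gcongr
      push_cast
      push_cast at ih
      linarith
  refine ⟨min (z 1) δ, lt_min hz1 hδ0, 1 + π, by positivity, fun n hn => ?_⟩
  have hnorm := norm_eq (hzpos n hn) (hzzero n hn)
  rw [hnorm]
  have hn1 : (1:ℝ) ≤ (n:ℝ) := by exact_mod_cast hn
  constructor
  · have h1 := hlb n hn
    have hm1 : min (z 1) δ ≤ z 1 := min_le_left _ _
    have hm2 : min (z 1) δ ≤ δ := min_le_right _ _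
    have hm0 : 0 < min (z 1) δ := lt_min hz1 hδ0
    nlinarith [h1, hm1, hm2, hm0, hn1]
  · have h2 := hub n hn
    nlinarith [h2, hn1, hpi]
end

section
/- For all positive integers m ≠ n, ∫₀¹ J₀′(z_m r) J₀′(z_n r) r dr = 0; that is, the radial derivatives of distinct Dirichlet eigenfunctions are orthogonal in L²((0,1), r dr). -/
open FormalMultilinearSeries

set_option maxHeartbeats 1000000

/-- All-radii summability of coefficients. -/
def AllS (a : ℕ → ℝ) : Prop := ∀ r : ℝ, 0 ≤ r → Summable fun n => |a n| * r ^ n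

lemma AllS.shift {a : ℕ → ℝ} (h : AllS a) : AllS (fun n => ((n : ℝ) + 1) * a (n + 1)) := by
  intro r hr
  have hsum : Summable fun n => |a (n + 1)| * (2 * r + 2) ^ (n + 1) := by
    have := h (2 * r + 2) (by linarith)
    exact (summable_nat_add_iff 1).2 this
  refine Summable.of_nonneg_of_le (fun n => by positivity) (fun n => ?_) hsum
  have h1 : ((n : ℝ) + 1) ≤ 2 ^ n := by
    exact_mod_cast Nat.lt_two_pow_self (n := n)
  have h2 : r ^ n ≤ (r + 1) ^ n := pow_le_pow_left₀ hr (by linarith) n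
  have habs : |(n : ℝ) + 1| = (n : ℝ) + 1 := abs_of_nonneg (by positivity)
  have e1 : |((n : ℝ) + 1) * a (n + 1)| * r ^ n = ((n : ℝ) + 1) * (|a (n + 1)| * r ^ n) := by
    rw [abs_mul, habs]; ring
  have e2 : ((n : ℝ) + 1) * (|a (n + 1)| * r ^ n) ≤ 2 ^ n * (|a (n + 1)| * (r + 1) ^ n) :=
    mul_le_mul h1 (by gcongr) (by positivity) (by positivity)
  have e3 : (2 : ℝ) ^ n * (|a (n + 1)| * (r + 1) ^ n) = |a (n + 1)| * (2 * r + 2) ^ n := by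
    have : (2 * r + 2) ^ n = 2 ^ n * (r + 1) ^ n := by
      rw [← mul_pow]; ring_nf
    rw [this]; ring
  have e4 : |a (n + 1)| * (2 * r + 2) ^ n ≤ |a (n + 1)| * (2 * r + 2) ^ (n + 1) := by
    apply mul_le_mul_of_nonneg_left _ (abs_nonneg _)
    exact pow_le_pow_right₀ (by linarith) (Nat.le_succ n)
  linarith [e2, e4, e3.le, e3.ge, e1.le, e1.ge]

lemma hasDerivAt_psum {a : ℕ → ℝ} (h : AllS a) (x : ℝ) :
    HasDerivAt (fun y : ℝ => ∑' n : ℕ, a n * y ^ n)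
      (∑' n : ℕ, ((n : ℝ) + 1) * a (n + 1) * x ^ n) x := by
  set p := ofScalars ℝ a with hp
  have hnorm : ∀ n, ‖p n‖ = |a n| := fun n => by
    rw [hp, ofScalars_norm]; exact Real.norm_eq_abs _
  have hrad : p.radius = ⊤ := by
    apply p.radius_eq_top_of_summable_norm
    intro r
    simpa [hnorm] using h r r.coe_nonneg
  have hball : HasFPowerSeriesOnBall p.sum p 0 ⊤ := by
    have := p.hasFPowerSeriesOnBall (by rw [hrad]; exact ENNReal.zero_lt_top)
    rwa [hrad] at this
  have hsum_eq : (fun y : ℝ => ∑' n : ℕ, a n * y ^ n) = p.sum := by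
    funext y
    rw [FormalMultilinearSeries.sum]
    refine tsum_congr fun n => ?_
    rw [hp, ofScalars_apply_eq, smul_eq_mul]
  have hd : HasFPowerSeriesOnBall (fderiv ℝ p.sum) p.derivSeries 0 ⊤ := hball.fderiv
  have hs : HasSum (fun n => p.derivSeries n (fun _ => x)) (fderiv ℝ p.sum (0 + x)) :=
    hd.hasSum (by simp)
  have hs1 : HasSum (fun n => p.derivSeries n (fun _ => x) 1) (fderiv ℝ p.sum (0 + x) 1) :=
    hs.mapL (ContinuousLinearMap.apply ℝ ℝ 1)
  have hterm : ∀ n : ℕ, p.derivSeries n (fun _ => x) 1 = ((n : ℝ) + 1) * a (n + 1) * x ^ n := by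
    intro n
    have h1 : (fun _ : Fin n => x) = fun _ : Fin n => x • (1 : ℝ) := by funext i; simp
    rw [h1, (p.derivSeries n).map_smul_univ]
    rw [ContinuousLinearMap.smul_apply, p.derivSeries_apply_diag]
    have hc : (ofScalars ℝ a (n + 1)) (fun _ => (1 : ℝ)) = a (n + 1) := by
      rw [ofScalars_apply_eq]; simp
    show ((∏ _i : Fin n, x) • (n + 1) • (ofScalars ℝ a (n + 1)) fun _ => (1:ℝ)) = _
    rw [hc]
    simp [Finset.prod_const, smul_eq_mul]
    ring
  have hdiff : DifferentiableAt ℝ p.sum x := by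
    have : AnalyticAt ℝ p.sum x := hball.analyticAt_of_mem (by simp)
    exact this.differentiableAt
  have hderiv_val : deriv p.sum x = ∑' n : ℕ, ((n : ℝ) + 1) * a (n + 1) * x ^ n := by
    have ht := hs1.tsum_eq
    rw [zero_add, fderiv_apply_one_eq_deriv] at ht
    rw [← ht]
    exact tsum_congr hterm
  rw [hsum_eq]
  have := hdiff.hasDerivAt
  rwa [hderiv_val] at this


lemma AllS.summable {a : ℕ → ℝ} (h : AllS a) (x : ℝ) :
    Summable (fun n => a n * x ^ n) := by
  have := h |x| (abs_nonneg x)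
  apply Summable.of_abs
  simpa [abs_mul, abs_pow] using this

/-- Even-index Bessel coefficients. -/
noncomputable def cJ (j : ℕ) : ℝ := (-1) ^ j / ((j.factorial : ℝ) ^ 2 * 4 ^ j)

/-- Bessel coefficients as a full power series. -/
noncomputable def aJ (n : ℕ) : ℝ := if Even n then cJ (n / 2) else 0

lemma aJ_even (j : ℕ) : aJ (2 * j) = cJ j := by
  simp [aJ, Nat.mul_div_cancel_left j (by norm_num : 0 < 2)]

lemma aJ_odd {n : ℕ} (h : ¬ Even n) : aJ n = 0 := by simp [aJ, h]

lemma cJ_abs (j : ℕ) : |cJ j| = 1 / ((j.factorial : ℝ) ^ 2 * 4 ^ j) := by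
  rw [cJ, abs_div, abs_pow, abs_neg, abs_one, one_pow]
  congr 1
  rw [abs_of_pos]
  positivity

lemma aJ_allS : AllS aJ := by
  intro r hr
  have hinj : Function.Injective (fun j : ℕ => 2 * j) := fun a b h => by
    dsimp at h; omega
  have hvan : ∀ n ∉ Set.range (fun j : ℕ => 2 * j), |aJ n| * r ^ n = 0 := by
    intro n hn
    have hne : ¬ Even n := by
      rintro ⟨k, hk⟩
      exact hn ⟨k, by dsimp; omega⟩
    rw [aJ_odd hne, abs_zero, zero_mul]
  rw [← hinj.summable_iff hvan]
  have : Summable (fun j : ℕ => |aJ (2 * j)| * r ^ (2 * j)) := by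
    apply Summable.of_nonneg_of_le (fun j => by positivity)
      (fun j => ?_) (Real.summable_pow_div_factorial (r ^ 2))
    rw [aJ_even, cJ_abs, pow_mul, div_mul_eq_mul_div, one_mul]
    have h1 : (1 : ℝ) ≤ (j.factorial : ℝ) := by
      exact_mod_cast Nat.one_le_iff_ne_zero.2 j.factorial_ne_zero
    have h2 : (1 : ℝ) ≤ (4 : ℝ) ^ j := one_le_pow₀ (by norm_num)
    apply div_le_div_of_nonneg_left (by positivity) (by linarith)
    nlinarith
  exact this

lemma J0_eq (x : ℝ) : J0 x = ∑' n : ℕ, aJ n * x ^ n := by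
  have hterm : ∀ j : ℕ, ((-1 : ℝ) ^ j / ((Nat.factorial j : ℝ)) ^ 2) * (x / 2) ^ (2 * j)
      = cJ j * x ^ (2 * j) := by
    intro j
    have h4 : (2 : ℝ) ^ (2 * j) = 4 ^ j := by
      rw [pow_mul]; norm_num
    rw [div_pow, h4, cJ]
    have h1 : ((j.factorial : ℝ)) ≠ 0 := Nat.cast_ne_zero.2 j.factorial_ne_zero
    have h2 : ((4 : ℝ)) ^ j ≠ 0 := by positivity
    field_simp
  rw [J0, tsum_congr hterm]
  symm
  refine tsum_eq_tsum_of_ne_zero_bij (fun j => 2 * (j : ℕ)) ?_ ?_ ?_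
  · intro a b h
    dsimp at h
    exact Subtype.ext (by omega)
  · intro n hn
    have hev : Even n := by
      by_contra hodd
      simp [aJ_odd hodd] at hn
    obtain ⟨k, hk⟩ := hev
    have hk2 : n = 2 * k := by omega
    refine ⟨⟨k, ?_⟩, by dsimp; omega⟩
    show cJ k * x ^ (2 * k) ≠ 0
    rw [← aJ_even, ← hk2]
    simpa using hn
  · intro j
    rw [← aJ_even]

lemma aJ_rec (n : ℕ) : ((n : ℝ) + 2) ^ 2 * aJ (n + 2) + aJ n = 0 := by
  rcases Nat.even_or_odd n with he | ho
  · obtain ⟨j, rfl⟩ := he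
    have e1 : j + j = 2 * j := by ring
    have e2 : j + j + 2 = 2 * (j + 1) := by ring
    rw [e2, e1, aJ_even, aJ_even]
    simp only [cJ, Nat.factorial_succ]
    have h1 : ((j.factorial : ℝ)) ≠ 0 := Nat.cast_ne_zero.2 j.factorial_ne_zero
    have h2 : ((4 : ℝ)) ^ j ≠ 0 := by positivity
    push_cast
    field_simp
    ring
  · obtain ⟨k, rfl⟩ := ho
    rw [aJ_odd (by simp [parity_simps]), aJ_odd (by simp [parity_simps])]
    ring

/-- Coefficients of the derivative series. -/
noncomputable def bJ (n : ℕ) : ℝ := ((n : ℝ) + 1) * aJ (n + 1)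

/-- Coefficients of the second derivative series. -/
noncomputable def eJ (n : ℕ) : ℝ := ((n : ℝ) + 1) * bJ (n + 1)

lemma bJ_allS : AllS bJ := aJ_allS.shift

lemma eJ_allS : AllS eJ := bJ_allS.shift

/-- The derivative of J0. -/
noncomputable def F1J (x : ℝ) : ℝ := ∑' n : ℕ, bJ n * x ^ n

/-- The second derivative of J0. -/
noncomputable def F2J (x : ℝ) : ℝ := ∑' n : ℕ, eJ n * x ^ n

lemma hasDerivAt_J0 (x : ℝ) : HasDerivAt J0 (F1J x) x := by
  have h : J0 = fun y : ℝ => ∑' n : ℕ, aJ n * y ^ n := funext J0_eq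
  rw [h]
  exact hasDerivAt_psum aJ_allS x

lemma hasDerivAt_F1J (x : ℝ) : HasDerivAt F1J (F2J x) x := by
  have h : F1J = fun y : ℝ => ∑' n : ℕ, bJ n * y ^ n := rfl
  rw [h]
  exact hasDerivAt_psum bJ_allS x

lemma bJ_zero : bJ 0 = 0 := by
  have : aJ 1 = 0 := aJ_odd (by decide)
  simp [bJ, this]

lemma J0_ode (x : ℝ) : x * F2J x + F1J x + x * J0 x = 0 := by
  have ha := aJ_allS.summable x
  have hb := bJ_allS.summable x
  have he := eJ_allS.summable x
  have h1 : x * F2J x = ∑' n : ℕ, eJ n * x ^ (n + 1) := by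
    rw [F2J, ← tsum_mul_left]
    exact tsum_congr fun n => by ring
  have h2 : F1J x = ∑' n : ℕ, bJ (n + 1) * x ^ (n + 1) := by
    rw [F1J, Summable.tsum_eq_zero_add hb, bJ_zero]
    simp
  have h3 : x * J0 x = ∑' n : ℕ, aJ n * x ^ (n + 1) := by
    rw [J0_eq, ← tsum_mul_left]
    exact tsum_congr fun n => by ring
  have s1 : Summable (fun n : ℕ => eJ n * x ^ (n + 1)) :=
    (he.mul_left x).congr fun n => by ring
  have s2 : Summable (fun n : ℕ => bJ (n + 1) * x ^ (n + 1)) := by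
    have := (summable_nat_add_iff 1).2 hb
    exact this
  have s3 : Summable (fun n : ℕ => aJ n * x ^ (n + 1)) :=
    (ha.mul_left x).congr fun n => by ring
  rw [h1, h2, h3, ← Summable.tsum_add s1 s2, ← Summable.tsum_add (s1.add s2) s3]
  have : ∀ n : ℕ, eJ n * x ^ (n + 1) + bJ (n + 1) * x ^ (n + 1) + aJ n * x ^ (n + 1) = 0 := by
    intro n
    have hrec := aJ_rec n
    have : eJ n + bJ (n + 1) + aJ n = 0 := by
      simp only [eJ, bJ]
      push_cast
      linear_combination hrec
    linear_combination x ^ (n + 1) * this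
  rw [tsum_congr this, tsum_zero]

/-- Orthogonality in `L²((0,1), r dr)` of the radial derivatives of distinct Dirichlet
eigenfunctions: `∫₀¹ J₀′(z_m r) J₀′(z_n r) r dr = 0` for `m ≠ n`. -/
theorem deriv_eigenfunction_orthogonal
    (z : ℕ → ℝ)
    (hzpos : ∀ n, 1 ≤ n → 0 < z n)
    (hzmono : ∀ m n, 1 ≤ m → m < n → z m < z n)
    (hzzero : ∀ n, 1 ≤ n → J0 (z n) = 0)
    (hzall : ∀ x : ℝ, 0 < x → J0 x = 0 → ∃ n, 1 ≤ n ∧ z n = x) :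
    ∀ m n : ℕ, 1 ≤ m → 1 ≤ n → m ≠ n →
      ∫ r in (0 : ℝ)..1, deriv J0 (z m * r) * deriv J0 (z n * r) * r = 0 := by
  intro m n hm hn hmn
  set α := z m with hα'
  set β := z n with hβ'
  have hα : 0 < α := hzpos m hm
  have hβ : 0 < β := hzpos n hn
  have hne : α ≠ β := by
    rcases Nat.lt_or_ge m n with h | h
    · exact ne_of_lt (hzmono m n hm h)
    · exact (ne_of_lt (hzmono n m hn (lt_of_le_of_ne h (Ne.symm hmn)))).symm
  have hsq : β ^ 2 - α ^ 2 ≠ 0 := by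
    rcases hne.lt_or_gt with h | h
    · nlinarith
    · nlinarith
  set K := α ^ 2 / (β ^ 2 - α ^ 2) with hK'
  have hK : K * (β ^ 2 - α ^ 2) = α ^ 2 := div_mul_cancel₀ _ hsq
  have hdJ : deriv J0 = F1J := funext fun x => (hasDerivAt_J0 x).deriv
  -- the antiderivative
  set G : ℝ → ℝ := fun r =>
    (r * (α * F1J (α * r)) * J0 (β * r) +
      K * (r * ((α * F1J (α * r)) * J0 (β * r) - J0 (α * r) * (β * F1J (β * r))))) / (α * β)
    with hG'
  have key : ∀ r : ℝ, HasDerivAt G (F1J (α * r) * F1J (β * r) * r) r := by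
    intro r
    have hlinα : HasDerivAt (fun t : ℝ => α * t) α r := by
      simpa using (hasDerivAt_id r).const_mul α
    have hlinβ : HasDerivAt (fun t : ℝ => β * t) β r := by
      simpa using (hasDerivAt_id r).const_mul β
    have hu : HasDerivAt (fun t => J0 (α * t)) (F1J (α * r) * α) r :=
      (hasDerivAt_J0 (α * r)).comp r hlinα
    have hu1 : HasDerivAt (fun t => F1J (α * t)) (F2J (α * r) * α) r :=
      (hasDerivAt_F1J (α * r)).comp r hlinα
    have hv : HasDerivAt (fun t => J0 (β * t)) (F1J (β * r) * β) r :=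
      (hasDerivAt_J0 (β * r)).comp r hlinβ
    have hv1 : HasDerivAt (fun t => F1J (β * t)) (F2J (β * r) * β) r :=
      (hasDerivAt_F1J (β * r)).comp r hlinβ
    have hA := ((hasDerivAt_id r).mul (hu1.const_mul α)).mul hv
    have hB := (hasDerivAt_id r).mul (((hu1.const_mul α).mul hv).sub (hu.mul (hv1.const_mul β)))
    have hF := (hA.add (hB.const_mul K)).div_const (α * β)
    convert hF using 1
    · rfl
    · rfl
    · rfl
    have ode1 := J0_ode (α * r)
    have ode2 := J0_ode (β * r)
    rw [eq_div_iff (mul_ne_zero hα.ne' hβ.ne')]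
    simp only [id_eq, Pi.mul_apply, Pi.sub_apply]
    linear_combination (-(1 + K) * α * J0 (β * r)) * ode1 + (K * β * J0 (α * r)) * ode2 +
      (-(r * J0 (α * r) * J0 (β * r))) * hK
  have hdiffF : Differentiable ℝ F1J := fun x => (hasDerivAt_F1J x).differentiableAt
  have hcont : Continuous F1J := hdiffF.continuous
  have hint : IntervalIntegrable (fun r : ℝ => F1J (α * r) * F1J (β * r) * r)
      MeasureTheory.volume 0 1 := by
    apply Continuous.intervalIntegrable
    exact ((hcont.comp (continuous_const.mul continuous_id)).mul
      (hcont.comp (continuous_const.mul continuous_id))).mul continuous_id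
  rw [hdJ]
  have := intervalIntegral.integral_eq_sub_of_hasDerivAt
    (f := G) (fun x _ => key x) hint
  rw [this]
  have hJα : J0 α = 0 := hzzero m hm
  have hJβ : J0 β = 0 := hzzero n hn
  simp only [hG']
  norm_num [hJα, hJβ]
end

section
/- For every ε > 0 there exists C_ε > 0 such that for every integer l ≥ 0 and all real numbers N₁, N₂ ≥ 1, the number of pairs of positive integers (n₁, n₂) with (4n₁ − 1)² + (4n₂ − 1)² = l, n₁ ≤ N₁ and n₂ ≤ N₂ is at most C_ε (min(N₁, N₂))^ε. -/
set_option maxHeartbeats 1000000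


lemma no_three_core (l : ℕ) (A a₁ a₂ a₃ b₁ b₂ b₃ : ℤ)
    (ha1 : 1 ≤ a₁) (h12 : a₁ < a₂) (h23 : a₂ < a₃) (hA : a₃ ≤ A)
    (hb1 : 1 ≤ b₁) (hb2 : 1 ≤ b₂) (hb3 : 1 ≤ b₃)
    (e1 : a₁ ^ 2 + b₁ ^ 2 = (l : ℤ)) (e2 : a₂ ^ 2 + b₂ ^ 2 = (l : ℤ))
    (e3 : a₃ ^ 2 + b₃ ^ 2 = (l : ℤ))
    (hl : 4 * A ^ 6 + A ^ 2 < (l : ℤ)) : False := by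
  have hA1 : 1 ≤ A := le_trans (by linarith) hA
  have hb21 : b₂ < b₁ := by
    have h : b₂ ^ 2 < b₁ ^ 2 := by nlinarith
    exact lt_of_pow_lt_pow_left₀ 2 (by linarith) h
  have hb32 : b₃ < b₂ := by
    have h : b₃ ^ 2 < b₂ ^ 2 := by nlinarith
    exact lt_of_pow_lt_pow_left₀ 2 (by linarith) h
  set D : ℤ := (a₂ - a₁) * (b₃ - b₁) - (a₃ - a₁) * (b₂ - b₁) with hD
  have key : D * ((b₂ + b₁) * (b₃ + b₁)) =
      -((a₂ - a₁) * (a₃ - a₁) * ((a₃ + a₁) * (b₂ + b₁) - (a₂ + a₁) * (b₃ + b₁))) := by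
    rw [hD]
    linear_combination (a₂ - a₁) * (b₂ + b₁) * e3 - (a₂ - a₁) * (b₂ + b₁) * e1 -
      (a₃ - a₁) * (b₃ + b₁) * e2 + (a₃ - a₁) * (b₃ + b₁) * e1
  have hbr : 0 < (a₃ + a₁) * (b₂ + b₁) - (a₂ + a₁) * (b₃ + b₁) := by
    have := mul_lt_mul'' (show a₂ + a₁ < a₃ + a₁ by linarith)
      (show b₃ + b₁ < b₂ + b₁ by linarith) (by linarith) (by linarith)
    linarith
  have hP : (0:ℤ) < (b₂ + b₁) * (b₃ + b₁) := mul_pos (by linarith) (by linarith)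
  have hQ : (0:ℤ) < (a₂ - a₁) * (a₃ - a₁) *
      ((a₃ + a₁) * (b₂ + b₁) - (a₂ + a₁) * (b₃ + b₁)) :=
    mul_pos (mul_pos (by linarith) (by linarith)) hbr
  have hDneg : D < 0 := by
    by_contra h
    push_neg at h
    have := mul_nonneg h hP.le
    linarith
  have hDle : (1:ℤ) ≤ -D := by linarith
  have h5 : (b₂ + b₁) * (b₃ + b₁) ≤
      (a₂ - a₁) * (a₃ - a₁) * ((a₃ + a₁) * (b₂ + b₁) - (a₂ + a₁) * (b₃ + b₁)) := by
    have h51 : (b₂ + b₁) * (b₃ + b₁) ≤ (-D) * ((b₂ + b₁) * (b₃ + b₁)) := by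
      nlinarith [mul_le_mul_of_nonneg_right hDle hP.le]
    linarith [key]
  have hab : (a₂ - a₁) * (a₃ - a₁) ≤ A * A :=
    mul_le_mul (by linarith) (by linarith) (by linarith) (by linarith)
  have hg1 : (a₃ + a₁) * (b₂ + b₁) - (a₂ + a₁) * (b₃ + b₁) ≤ (2 * A) * (b₂ + b₁) := by
    have h1 : (a₃ + a₁) * (b₂ + b₁) ≤ (2 * A) * (b₂ + b₁) :=
      mul_le_mul_of_nonneg_right (by linarith) (by linarith)
    have h2 : 0 ≤ (a₂ + a₁) * (b₃ + b₁) := mul_nonneg (by linarith) (by linarith)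
    linarith
  have h6 : (a₂ - a₁) * (a₃ - a₁) * ((a₃ + a₁) * (b₂ + b₁) - (a₂ + a₁) * (b₃ + b₁)) ≤
      A * A * ((2 * A) * (b₂ + b₁)) :=
    mul_le_mul hab hg1 hbr.le (by positivity)
  have h6' : (b₂ + b₁) * (b₃ + b₁) ≤ (b₂ + b₁) * (2 * A ^ 3) := by nlinarith [h5, h6]
  have h7 : b₃ + b₁ ≤ 2 * A ^ 3 := le_of_mul_le_mul_left h6' (by linarith)
  have ha1A : a₁ ^ 2 ≤ A ^ 2 := pow_le_pow_left₀ (by linarith) (by linarith) 2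
  have h8 : (2 * A ^ 3) ^ 2 < b₁ ^ 2 := by
    calc (2 * A ^ 3) ^ 2 = 4 * A ^ 6 := by ring
    _ < (l : ℤ) - A ^ 2 := by linarith
    _ ≤ (l : ℤ) - a₁ ^ 2 := by linarith
    _ = b₁ ^ 2 := by linarith
  have h9 : 2 * A ^ 3 < b₁ := lt_of_pow_lt_pow_left₀ 2 (by linarith) h8
  linarith

open Finset in
lemma divisor_bound_k (k : ℕ) (hk : 1 ≤ k) (n : ℕ) (hn : 1 ≤ n) :
    (n.divisors.card : ℝ) ≤ ((2 * k : ℝ) ^ (4 ^ k)) * (n : ℝ) ^ ((k : ℝ)⁻¹) := by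
  have hn0 : n ≠ 0 := by omega
  have hk0 : (0:ℝ) < (k:ℝ) := by exact_mod_cast hk
  have hd : (n.divisors.card : ℝ) = ∏ p ∈ n.primeFactors, ((n.factorization p : ℝ) + 1) := by
    rw [Nat.card_divisors hn0]; push_cast; rfl
  have hprodN : ∏ p ∈ n.primeFactors, p ^ (n.factorization p) = n := by
    rw [← Nat.support_factorization]
    exact Nat.factorization_prod_pow_eq_self hn0
  have hprod : (n : ℝ) = ∏ p ∈ n.primeFactors, ((p : ℝ) ^ (n.factorization p)) := by
    conv_lhs => rw [← hprodN]
    push_cast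
    rfl
  -- n ^ (1/k) as a product
  have hrpow : (n : ℝ) ^ ((k:ℝ)⁻¹) =
      ∏ p ∈ n.primeFactors, ((p : ℝ) ^ (n.factorization p)) ^ ((k:ℝ)⁻¹) := by
    rw [hprod, ← Real.finset_prod_rpow _ _ (fun p _ => by positivity)]
  -- pointwise bound
  have hpt : ∀ p ∈ n.primeFactors, ((n.factorization p : ℝ) + 1) ≤
      (if p < 4 ^ k then (2 * k : ℝ) else 1) * ((p : ℝ) ^ (n.factorization p)) ^ ((k:ℝ)⁻¹) := by
    intro p hp
    have hpp : p.Prime := Nat.prime_of_mem_primeFactors hp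
    have hp2 : (2 : ℝ) ≤ (p : ℝ) := by exact_mod_cast hpp.two_le
    set e := n.factorization p with he
    by_cases hcase : p < 4 ^ k
    · simp only [hcase, if_pos]
      -- (p^e)^(1/k) ≥ (2^e)^(1/k) = exp((e/k) log 2) ≥ 1 + e log2/k ≥ 1 + e/(2k)
      have h1 : ((2:ℝ) ^ (e:ℕ)) ^ ((k:ℝ)⁻¹) ≤ ((p : ℝ) ^ (e:ℕ)) ^ ((k:ℝ)⁻¹) :=
        Real.rpow_le_rpow (by positivity) (pow_le_pow_left₀ (by norm_num) hp2 e) (by positivity)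
      have h2 : ((2:ℝ) ^ (e:ℕ)) ^ ((k:ℝ)⁻¹) = Real.exp (Real.log 2 * ((e:ℝ) * (k:ℝ)⁻¹)) := by
        rw [← Real.rpow_natCast 2 e, ← Real.rpow_mul (by norm_num), Real.rpow_def_of_pos (by norm_num)]
      have h3 : 1 + Real.log 2 * ((e:ℝ) * (k:ℝ)⁻¹) ≤ ((2:ℝ) ^ (e:ℕ)) ^ ((k:ℝ)⁻¹) := by
        rw [h2]
        linarith [Real.add_one_le_exp (Real.log 2 * ((e:ℝ) * (k:ℝ)⁻¹))]
      have hlog : (0.6931471803 : ℝ) < Real.log 2 := Real.log_two_gt_d9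
      have he0 : (0:ℝ) ≤ (e:ℝ) := by positivity
      have hek : (0:ℝ) ≤ (e:ℝ) * (k:ℝ)⁻¹ := by positivity
      -- goal : e + 1 ≤ 2k * (p^e)^(1/k)
      have h4 : 1 + (e:ℝ) * (k:ℝ)⁻¹ / 2 ≤ ((p : ℝ) ^ (e:ℕ)) ^ ((k:ℝ)⁻¹) := by
        nlinarith [h1, h3]
      have h5 : (2 * (k:ℝ)) * (1 + (e:ℝ) * (k:ℝ)⁻¹ / 2) = 2 * (k:ℝ) + (e:ℝ) := by
        field_simp
      have hk1 : (1:ℝ) ≤ (k:ℝ) := by exact_mod_cast hk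
      nlinarith [mul_le_mul_of_nonneg_left h4 (show (0:ℝ) ≤ 2 * (k:ℝ) by positivity)]
    · simp only [hcase, if_neg, not_false_iff, one_mul]
      push_neg at hcase
      -- p ≥ 4^k : (p^e)^(1/k) ≥ 4^e ≥ e+1
      have h1 : ((4:ℝ) ^ (k * e)) ^ ((k:ℝ)⁻¹) ≤ ((p : ℝ) ^ (e:ℕ)) ^ ((k:ℝ)⁻¹) := by
        apply Real.rpow_le_rpow (by positivity) _ (by positivity)
        rw [pow_mul]
        apply pow_le_pow_left₀ (by positivity)
        exact_mod_cast hcase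
      have h2 : ((4:ℝ) ^ (k * e)) ^ ((k:ℝ)⁻¹) = (4:ℝ) ^ (e:ℕ) := by
        rw [← Real.rpow_natCast 4 (k*e), ← Real.rpow_mul (by norm_num), ← Real.rpow_natCast 4 e]
        congr 1
        push_cast
        field_simp
      have h3 : (e:ℝ) + 1 ≤ (4:ℝ) ^ (e:ℕ) := by
        have : e + 1 ≤ 4 ^ e := Nat.succ_le_of_lt (lt_of_lt_of_le (Nat.lt_two_pow_self (n := e))
          (Nat.pow_le_pow_left (by norm_num) e))
        exact_mod_cast this
      calc (e:ℝ) + 1 ≤ (4:ℝ) ^ (e:ℕ) := h3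
        _ = ((4:ℝ) ^ (k * e)) ^ ((k:ℝ)⁻¹) := h2.symm
        _ ≤ ((p : ℝ) ^ (e:ℕ)) ^ ((k:ℝ)⁻¹) := h1
  -- combine
  have hmain : (n.divisors.card : ℝ) ≤
      (∏ p ∈ n.primeFactors, (if p < 4 ^ k then (2 * k : ℝ) else 1)) * (n : ℝ) ^ ((k:ℝ)⁻¹) := by
    rw [hd, hrpow, ← Finset.prod_mul_distrib]
    exact Finset.prod_le_prod (fun p _ => by positivity) hpt
  have hC : (∏ p ∈ n.primeFactors, (if p < 4 ^ k then (2 * k : ℝ) else 1)) ≤ (2 * k : ℝ) ^ (4 ^ k) := by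
    have h2k : (1:ℝ) ≤ 2 * (k:ℝ) := by
      have : (1:ℝ) ≤ (k:ℝ) := by exact_mod_cast hk
      linarith
    calc (∏ p ∈ n.primeFactors, (if p < 4 ^ k then (2 * k : ℝ) else 1))
        = ∏ p ∈ n.primeFactors.filter (· < 4 ^ k), (2 * k : ℝ) := by
          rw [← Finset.prod_filter]
      _ = (2 * k : ℝ) ^ (n.primeFactors.filter (· < 4 ^ k)).card := by
          rw [Finset.prod_const]
      _ ≤ (2 * k : ℝ) ^ (4 ^ k) := by
          apply pow_le_pow_right₀ h2k
          calc (n.primeFactors.filter (· < 4 ^ k)).card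
              ≤ (Finset.range (4 ^ k)).card := Finset.card_le_card (by
                intro p hp
                simp only [Finset.mem_filter] at hp
                exact Finset.mem_range.mpr hp.2)
            _ = 4 ^ k := Finset.card_range _
  have hnn : (0:ℝ) ≤ (n : ℝ) ^ ((k:ℝ)⁻¹) := by positivity
  calc (n.divisors.card : ℝ) ≤ _ := hmain
    _ ≤ (2 * k : ℝ) ^ (4 ^ k) * (n : ℝ) ^ ((k:ℝ)⁻¹) := mul_le_mul_of_nonneg_right hC hnn

lemma divisor_bound (ε : ℝ) (hε : 0 < ε) :
    ∃ C : ℝ, 0 < C ∧ ∀ n : ℕ, 1 ≤ n → (n.divisors.card : ℝ) ≤ C * (n : ℝ) ^ ε := by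
  set k : ℕ := max 1 ⌈ε⁻¹⌉₊ with hkdef
  have hk : 1 ≤ k := le_max_left _ _
  have hkpos : (0:ℝ) < (k:ℝ) := by exact_mod_cast hk
  have h1 : ε⁻¹ ≤ (k:ℝ) :=
    le_trans (Nat.le_ceil _) (by exact_mod_cast le_max_right 1 ⌈ε⁻¹⌉₊)
  have hke : (k:ℝ)⁻¹ ≤ ε := by
    have h2 := inv_anti₀ (inv_pos.mpr hε) h1
    rwa [inv_inv] at h2
  refine ⟨(2 * k : ℝ) ^ (4 ^ k), by positivity, fun n hn => ?_⟩
  have hn1 : (1:ℝ) ≤ (n:ℝ) := by exact_mod_cast hn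
  calc (n.divisors.card : ℝ) ≤ (2 * k : ℝ) ^ (4 ^ k) * (n : ℝ) ^ ((k:ℝ)⁻¹) :=
        divisor_bound_k k hk n hn
    _ ≤ (2 * k : ℝ) ^ (4 ^ k) * (n : ℝ) ^ ε := by
        apply mul_le_mul_of_nonneg_left _ (by positivity)
        exact Real.rpow_le_rpow_of_exponent_le hn1 hke

lemma sqrtNegOne_ncard_le (m : ℕ) :
    {x : ZMod m | x ^ 2 = -1}.ncard ≤ m.divisors.card := by
  induction m using Nat.recOnPosPrimePosCoprime with
  | zero =>
    have : {x : ZMod 0 | x ^ 2 = -1} = ∅ := by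
      ext x
      simp only [Set.mem_setOf_eq, Set.mem_empty_iff_false, iff_false]
      intro h
      have h4 : ((ZMod.castHom (show (4:ℕ) ∣ 0 by norm_num) (ZMod 4)) x) ^ 2 = -1 := by
        rw [← map_pow, h, map_neg, map_one]
      have : ∀ y : ZMod 4, y ^ 2 ≠ -1 := by decide
      exact this _ h4
    simp [this]
  | one =>
    have h : {x : ZMod 1 | x ^ 2 = -1}.ncard ≤ ({(0 : ZMod 1)} : Set (ZMod 1)).ncard := by
      apply Set.ncard_le_ncard _ (Set.finite_singleton _)
      intro x _
      exact Subsingleton.elim x 0 ▸ rfl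
    simpa using h
  | prime_pow p n hpp hn =>
    have pp : p.Prime := hpp
    have hcard : (p ^ n).divisors.card = n + 1 := by
      rw [Nat.divisors_prime_pow pp, Finset.card_map, Finset.card_range]
    rw [hcard]
    have h2 : {x : ZMod (p ^ n) | x ^ 2 = -1}.ncard ≤ 2 := by
      by_cases hp2 : p = 2
      · subst hp2
        rcases eq_or_lt_of_le (show 1 ≤ n from hn) with hn1 | hn2
        · have : (1 : ℕ) = n := hn1
          subst this
          have hsub : {x : ZMod (2 ^ 1) | x ^ 2 = -1} ⊆ Set.univ := Set.subset_univ _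
          calc {x : ZMod (2 ^ 1) | x ^ 2 = -1}.ncard
              ≤ (Set.univ : Set (ZMod (2 ^ 1))).ncard :=
                Set.ncard_le_ncard hsub Set.finite_univ
            _ = 2 := by rw [Set.ncard_univ]; simp
        · have hempty : {x : ZMod (2 ^ n) | x ^ 2 = -1} = ∅ := by
            ext x
            simp only [Set.mem_setOf_eq, Set.mem_empty_iff_false, iff_false]
            intro h
            have hdvd : (4 : ℕ) ∣ 2 ^ n := by
              have h4 : (4 : ℕ) = 2 ^ 2 := by norm_num
              rw [h4]
              exact pow_dvd_pow 2 hn2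
            have h4 : ((ZMod.castHom hdvd (ZMod 4)) x) ^ 2 = -1 := by
              rw [← map_pow, h, map_neg, map_one]
            have hno : ∀ y : ZMod 4, y ^ 2 ≠ -1 := by decide
            exact hno _ h4
          simp [hempty]
      · rcases Set.eq_empty_or_nonempty {x : ZMod (p ^ n) | x ^ 2 = -1} with he | ⟨x, hx⟩
        · simp [he]
        · have hx' : x ^ 2 = -1 := hx
          haveI : NeZero (p ^ n) := ⟨pow_ne_zero _ pp.pos.ne'⟩
          have hdich : ∀ y ∈ {x : ZMod (p ^ n) | x ^ 2 = -1}, y = x ∨ y = -x := by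
            intro y hy
            have hy' : y ^ 2 = -1 := hy
            set X : ℤ := (x.val : ℤ) with hXdef
            set Y : ℤ := (y.val : ℤ) with hYdef
            have hXx : ((X : ℤ) : ZMod (p ^ n)) = x := by
              rw [hXdef]
              push_cast [ZMod.natCast_val, ZMod.cast_id]
              rfl
            have hYy : ((Y : ℤ) : ZMod (p ^ n)) = y := by
              rw [hYdef]
              push_cast [ZMod.natCast_val, ZMod.cast_id]
              rfl
            have hdvdX : ((p : ℤ)) ^ n ∣ X ^ 2 + 1 := by
              have hz : ((X ^ 2 + 1 : ℤ) : ZMod (p ^ n)) = 0 := by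
                push_cast [hXx, hx']
                ring
              have hq := (ZMod.intCast_zmod_eq_zero_iff_dvd _ _).mp hz
              exact_mod_cast hq
            have hdvdY : ((p : ℤ)) ^ n ∣ Y ^ 2 + 1 := by
              have hz : ((Y ^ 2 + 1 : ℤ) : ZMod (p ^ n)) = 0 := by
                push_cast [hYy, hy']
                ring
              have hq := (ZMod.intCast_zmod_eq_zero_iff_dvd _ _).mp hz
              exact_mod_cast hq
            have hdvd : (p : ℤ) ^ n ∣ (Y - X) * (Y + X) := by
              have heq : (Y - X) * (Y + X) = (Y ^ 2 + 1) - (X ^ 2 + 1) := by ring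
              rw [heq]
              exact dvd_sub hdvdY hdvdX
            have hpZ : Prime (p : ℤ) := Nat.prime_iff_prime_int.mp pp
            have hpdvd1 : (p : ℤ) ∣ (p : ℤ) ^ n := dvd_pow_self _ (by omega)
            have hnot2 : ¬ ((p : ℤ) ∣ (Y - X) ∧ (p : ℤ) ∣ (Y + X)) := by
              rintro ⟨hd1, hd2⟩
              have h2Y : (p : ℤ) ∣ 2 * Y := by
                have h2e : 2 * Y = (Y - X) + (Y + X) := by ring
                rw [h2e]
                exact dvd_add hd1 hd2
              rcases hpZ.dvd_mul.mp h2Y with hd | hd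
              · have hd' : (p : ℕ) ∣ 2 := by exact_mod_cast hd
                exact hp2 ((Nat.prime_dvd_prime_iff_eq pp Nat.prime_two).mp hd')
              · have hY2 : (p : ℤ) ∣ Y ^ 2 := by
                  have hsq : Y ^ 2 = Y * Y := sq Y
                  rw [hsq]
                  exact hd.mul_left Y
                have hone : (p : ℤ) ∣ 1 := by
                  have hs := dvd_sub (hpdvd1.trans hdvdY) hY2
                  simpa using hs
                have hone' : (p : ℕ) ∣ 1 := by exact_mod_cast hone
                simp only [Nat.dvd_one] at hone'
                exact pp.one_lt.ne' hone'
            by_cases hc : (p : ℤ) ∣ (Y + X)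
            · have hnd : ¬ (p : ℤ) ∣ (Y - X) := fun h => hnot2 ⟨h, hc⟩
              have hcop : IsCoprime ((p : ℤ) ^ n) (Y - X) :=
                IsCoprime.pow_left (hpZ.coprime_iff_not_dvd.mpr hnd)
              have hfin : (p : ℤ) ^ n ∣ Y + X := hcop.dvd_of_dvd_mul_left hdvd
              right
              have hdvd' : ((p ^ n : ℕ) : ℤ) ∣ (-X) - Y := by
                have hr : (-X) - Y = -(Y + X) := by ring
                rw [hr]
                push_cast
                exact dvd_neg.mpr hfin
              have hmod : ((Y : ℤ) : ZMod (p ^ n)) = ((-X : ℤ) : ZMod (p ^ n)) :=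
                (ZMod.intCast_eq_intCast_iff _ _ _).mpr (Int.modEq_iff_dvd.mpr hdvd')
              rw [hYy] at hmod
              rw [hmod]
              push_cast [hXx]
              rfl
            · have hcop : IsCoprime ((p : ℤ) ^ n) (Y + X) :=
                IsCoprime.pow_left (hpZ.coprime_iff_not_dvd.mpr hc)
              have hfin : (p : ℤ) ^ n ∣ Y - X := hcop.dvd_of_dvd_mul_right hdvd
              left
              have hdvd' : ((p ^ n : ℕ) : ℤ) ∣ X - Y := by
                have hr : X - Y = -(Y - X) := by ring
                rw [hr]
                push_cast
                exact dvd_neg.mpr hfin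
              have hmod : ((Y : ℤ) : ZMod (p ^ n)) = ((X : ℤ) : ZMod (p ^ n)) :=
                (ZMod.intCast_eq_intCast_iff _ _ _).mpr (Int.modEq_iff_dvd.mpr hdvd')
              rw [hYy, hXx] at hmod
              exact hmod
          have hsub : {x : ZMod (p ^ n) | x ^ 2 = -1} ⊆ {x, -x} := by
            intro y hy
            rcases hdich y hy with h | h
            · rw [h]; exact Set.mem_insert _ _
            · rw [h]; exact Set.mem_insert_iff.mpr (Or.inr rfl)
          calc {x : ZMod (p ^ n) | x ^ 2 = -1}.ncard
              ≤ ({x, -x} : Set (ZMod (p ^ n))).ncard :=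
                Set.ncard_le_ncard hsub (Set.toFinite _)
            _ ≤ ({-x} : Set (ZMod (p ^ n))).ncard + 1 := Set.ncard_insert_le _ _
            _ ≤ 2 := by simp [Set.ncard_singleton]
    omega
  | coprime a b ha hb hab iha ihb =>
    haveI : NeZero a := ⟨by omega⟩
    haveI : NeZero b := ⟨by omega⟩
    haveI : NeZero (a * b) := ⟨by positivity⟩
    set e := ZMod.chineseRemainder hab with hedef
    set Sab := {x : ZMod (a * b) | x ^ 2 = -1} with hSab
    set Sa := {x : ZMod a | x ^ 2 = -1} with hSa
    set Sb := {x : ZMod b | x ^ 2 = -1} with hSb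
    have himg : (⇑e) '' Sab ⊆ Sa ×ˢ Sb := by
      rintro ⟨u, v⟩ ⟨x, hx, hex⟩
      have hx' : x ^ 2 = -1 := hx
      have hmap : e (x ^ 2) = -1 := by rw [hx', map_neg, map_one]
      rw [map_pow] at hmap
      rw [hex] at hmap
      constructor
      · have h1 := congrArg Prod.fst hmap
        simpa [hSa] using h1
      · have h2 := congrArg Prod.snd hmap
        simpa [hSb] using h2
    have himg1 : ∀ q ∈ (⇑e) '' Sab, q.1 ∈ Sa ∧ q.2 ∈ Sb := by
      intro q hq
      have := himg hq
      exact ⟨this.1, this.2⟩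
    have h1 : Sab.ncard = ((⇑e) '' Sab).ncard :=
      (Set.ncard_image_of_injective _ e.injective).symm
    have h2 : ((⇑e) '' Sab).ncard ≤ (Sa ×ˢ Sb).ncard :=
      Set.ncard_le_ncard himg (Set.toFinite _)
    have h3 : (Sa ×ˢ Sb).ncard = Sa.ncard * Sb.ncard := by
      rw [Set.ncard_eq_toFinset_card' (Sa ×ˢ Sb), Set.ncard_eq_toFinset_card' Sa,
        Set.ncard_eq_toFinset_card' Sb, Set.toFinset_prod, Finset.card_product]
    calc Sab.ncard = ((⇑e) '' Sab).ncard := h1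
      _ ≤ (Sa ×ˢ Sb).ncard := h2
      _ = Sa.ncard * Sb.ncard := h3
      _ ≤ a.divisors.card * b.divisors.card := Nat.mul_le_mul iha ihb
      _ = (a * b).divisors.card := (Nat.Coprime.card_divisors_mul hab).symm

def repFinset (l : ℕ) : Finset (ℕ × ℕ) :=
  (Finset.range (l + 1) ×ˢ Finset.range (l + 1)).filter
    fun p => 0 < p.1 ∧ 0 < p.2 ∧ p.1 ^ 2 + p.2 ^ 2 = l

lemma rep_unpack (l g m : ℕ) (hm : m * g ^ 2 = l) (hgpos : 0 < g) (p : ℕ × ℕ)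
    (hp1 : 0 < p.1) (hp2 : 0 < p.2) (heq : p.1 ^ 2 + p.2 ^ 2 = l)
    (hgcd : Nat.gcd p.1 p.2 = g) :
    0 < p.1 / g ∧ 0 < p.2 / g ∧ (p.1 / g) * g = p.1 ∧ (p.2 / g) * g = p.2 ∧
      Nat.Coprime (p.1 / g) (p.2 / g) ∧ (p.1 / g) ^ 2 + (p.2 / g) ^ 2 = m := by
  have hd1 : g ∣ p.1 := hgcd ▸ Nat.gcd_dvd_left _ _
  have hd2 : g ∣ p.2 := hgcd ▸ Nat.gcd_dvd_right _ _
  have hc1 : (p.1 / g) * g = p.1 := Nat.div_mul_cancel hd1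
  have hc2 : (p.2 / g) * g = p.2 := Nat.div_mul_cancel hd2
  have hpos1 : 0 < p.1 / g := Nat.div_pos (Nat.le_of_dvd hp1 hd1) hgpos
  have hpos2 : 0 < p.2 / g := Nat.div_pos (Nat.le_of_dvd hp2 hd2) hgpos
  have hcop : Nat.Coprime (p.1 / g) (p.2 / g) := by
    rw [← hgcd]
    exact Nat.coprime_div_gcd_div_gcd (hgcd ▸ hgpos)
  have hmeq : (p.1 / g) ^ 2 + (p.2 / g) ^ 2 = m := by
    have hexp : ((p.1 / g) ^ 2 + (p.2 / g) ^ 2) * g ^ 2 = m * g ^ 2 := by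
      rw [hm, ← heq]
      calc ((p.1 / g) ^ 2 + (p.2 / g) ^ 2) * g ^ 2
          = ((p.1 / g) * g) ^ 2 + ((p.2 / g) * g) ^ 2 := by ring
        _ = p.1 ^ 2 + p.2 ^ 2 := by rw [hc1, hc2]
    exact Nat.eq_of_mul_eq_mul_right (by positivity) hexp
  exact ⟨hpos1, hpos2, hc1, hc2, hcop, hmeq⟩

lemma repFinset_card_le (l : ℕ) (hl : 1 ≤ l) :
    (repFinset l).card ≤ l.divisors.card ^ 2 := by
  have hl0 : l ≠ 0 := by omega
  set f : ℕ × ℕ → ℕ := fun p => Nat.gcd p.1 p.2 with hf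
  have hmem : ∀ p ∈ repFinset l, 0 < p.1 ∧ 0 < p.2 ∧ p.1 ^ 2 + p.2 ^ 2 = l := by
    intro p hp
    have := Finset.mem_filter.mp hp
    exact this.2
  have himage : (repFinset l).image f ⊆ l.divisors := by
    intro g hg
    obtain ⟨p, hp, rfl⟩ := Finset.mem_image.mp hg
    obtain ⟨hp1, hp2, heq⟩ := hmem p hp
    refine Nat.mem_divisors.mpr ⟨?_, hl0⟩
    have h1 : f p ∣ p.1 ^ 2 := dvd_pow (Nat.gcd_dvd_left _ _) two_ne_zero
    have h2 : f p ∣ p.2 ^ 2 := dvd_pow (Nat.gcd_dvd_right _ _) two_ne_zero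
    exact heq ▸ dvd_add h1 h2
  have hfiber : ∀ g ∈ (repFinset l).image f,
      ((repFinset l).filter (fun p => f p = g)).card ≤ l.divisors.card := by
    intro g hg
    obtain ⟨p₀, hp₀, hg0⟩ := Finset.mem_image.mp hg
    obtain ⟨hq1, hq2, heq0⟩ := hmem p₀ hp₀
    have hgpos : 0 < g := by
      rw [← hg0]
      exact Nat.gcd_pos_of_pos_left _ hq1
    have hg2 : g ^ 2 ∣ l := by
      have h1 : g ^ 2 ∣ p₀.1 ^ 2 := pow_dvd_pow_of_dvd (hg0 ▸ Nat.gcd_dvd_left _ _) 2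
      have h2 : g ^ 2 ∣ p₀.2 ^ 2 := pow_dvd_pow_of_dvd (hg0 ▸ Nat.gcd_dvd_right _ _) 2
      exact heq0 ▸ dvd_add h1 h2
    set m := l / g ^ 2 with hmdef
    have hm : m * g ^ 2 = l := Nat.div_mul_cancel hg2
    have hm1 : 1 ≤ m := by
      rcases Nat.eq_zero_or_pos m with h | h
      · rw [h, zero_mul] at hm; omega
      · exact h
    haveI : NeZero m := ⟨by omega⟩
    set φ : ℕ × ℕ → ZMod m := fun p => ((p.1 / g : ℕ) : ZMod m) * ((p.2 / g : ℕ) : ZMod m)⁻¹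
      with hφ
    have hcardsol : (Finset.univ.filter fun x : ZMod m => x ^ 2 = -1).card ≤ l.divisors.card := by
      have h1 : (Finset.univ.filter fun x : ZMod m => x ^ 2 = -1).card
          = {x : ZMod m | x ^ 2 = -1}.ncard := by
        rw [Set.ncard_eq_toFinset_card', Set.toFinset_setOf]
      rw [h1]
      refine le_trans (sqrtNegOne_ncard_le m) (Finset.card_le_card ?_)
      exact Nat.divisors_subset_of_dvd hl0 ⟨g ^ 2, hm.symm⟩
    refine le_trans (Finset.card_le_card_of_injOn φ ?_ ?_) hcardsol
    · -- maps into solutions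
      intro p hp
      obtain ⟨hprep, hpg⟩ := Finset.mem_filter.mp hp
      obtain ⟨hp1, hp2, heq⟩ := hmem p hprep
      obtain ⟨ha1, hb1, hca, hcb, hcop, hmeq⟩ := rep_unpack l g m hm hgpos p hp1 hp2 heq hpg
      have hbm : Nat.Coprime (p.2 / g) m := by
        have h1 : Nat.Coprime (p.2 / g) ((p.1 / g) ^ 2) := (hcop.symm.pow_right 2)
        have h2 : Nat.Coprime (p.2 / g) ((p.1 / g) ^ 2 + (p.2 / g) * (p.2 / g)) :=
          (Nat.coprime_add_mul_left_right _ _ _).mpr h1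
        rwa [show (p.1 / g) ^ 2 + (p.2 / g) * (p.2 / g) = (p.1 / g) ^ 2 + (p.2 / g) ^ 2 by ring,
          hmeq] at h2
      have hunit : IsUnit ((p.2 / g : ℕ) : ZMod m) :=
        (ZMod.isUnit_iff_coprime _ m).mpr hbm
      have hsq : (((p.1 / g : ℕ) : ZMod m)) ^ 2 = -(((p.2 / g : ℕ) : ZMod m)) ^ 2 := by
        have hz : (((p.1 / g) ^ 2 + (p.2 / g) ^ 2 : ℕ) : ZMod m) = 0 := by
          rw [hmeq, ZMod.natCast_self]
        push_cast at hz
        linear_combination hz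
      have hbinv : ((p.2 / g : ℕ) : ZMod m) * ((p.2 / g : ℕ) : ZMod m)⁻¹ = 1 :=
        ZMod.mul_inv_of_unit _ hunit
      rw [Finset.mem_coe, Finset.mem_filter]
      refine ⟨Finset.mem_univ _, ?_⟩
      show (((p.1 / g : ℕ) : ZMod m) * ((p.2 / g : ℕ) : ZMod m)⁻¹) ^ 2 = -1
      calc (((p.1 / g : ℕ) : ZMod m) * ((p.2 / g : ℕ) : ZMod m)⁻¹) ^ 2
          = (((p.1 / g : ℕ) : ZMod m)) ^ 2 * (((p.2 / g : ℕ) : ZMod m)⁻¹) ^ 2 := by ring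
        _ = -((((p.2 / g : ℕ) : ZMod m)) * (((p.2 / g : ℕ) : ZMod m))⁻¹) ^ 2 := by
            rw [hsq]; ring
        _ = -1 := by rw [hbinv]; norm_num
    · -- injective on fiber
      intro p hp q hq hpq
      simp only [Finset.coe_filter, Set.mem_setOf_eq] at hp hq
      obtain ⟨hprep, hpg⟩ := hp
      obtain ⟨hqrep, hqg⟩ := hq
      obtain ⟨hp1, hp2, heqp⟩ := hmem p hprep
      obtain ⟨hq1', hq2', heqq⟩ := hmem q hqrep
      obtain ⟨ha1, hb1, hca, hcb, hcop, hmeq⟩ := rep_unpack l g m hm hgpos p hp1 hp2 heqp hpg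
      obtain ⟨ha1', hb1', hca', hcb', hcop', hmeq'⟩ := rep_unpack l g m hm hgpos q hq1' hq2' heqq hqg
      set A₁ := ((p.1 / g : ℕ) : ZMod m)
      set B₁ := ((p.2 / g : ℕ) : ZMod m)
      set A₂ := ((q.1 / g : ℕ) : ZMod m)
      set B₂ := ((q.2 / g : ℕ) : ZMod m)
      have hbm : Nat.Coprime (p.2 / g) m := by
        have h1 : Nat.Coprime (p.2 / g) ((p.1 / g) ^ 2) := (hcop.symm.pow_right 2)
        have h2 : Nat.Coprime (p.2 / g) ((p.1 / g) ^ 2 + (p.2 / g) * (p.2 / g)) :=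
          (Nat.coprime_add_mul_left_right _ _ _).mpr h1
        rwa [show (p.1 / g) ^ 2 + (p.2 / g) * (p.2 / g) = (p.1 / g) ^ 2 + (p.2 / g) ^ 2 by ring,
          hmeq] at h2
      have hbm' : Nat.Coprime (q.2 / g) m := by
        have h1 : Nat.Coprime (q.2 / g) ((q.1 / g) ^ 2) := (hcop'.symm.pow_right 2)
        have h2 : Nat.Coprime (q.2 / g) ((q.1 / g) ^ 2 + (q.2 / g) * (q.2 / g)) :=
          (Nat.coprime_add_mul_left_right _ _ _).mpr h1
        rwa [show (q.1 / g) ^ 2 + (q.2 / g) * (q.2 / g) = (q.1 / g) ^ 2 + (q.2 / g) ^ 2 by ring,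
          hmeq'] at h2
      have hinv1 : B₁ * B₁⁻¹ = 1 :=
        ZMod.mul_inv_of_unit _ ((ZMod.isUnit_iff_coprime _ m).mpr hbm)
      have hinv2 : B₂ * B₂⁻¹ = 1 :=
        ZMod.mul_inv_of_unit _ ((ZMod.isUnit_iff_coprime _ m).mpr hbm')
      have hABmod : A₁ * B₂ = A₂ * B₁ := by
        have hφeq : A₁ * B₁⁻¹ = A₂ * B₂⁻¹ := hpq
        linear_combination (B₁ * B₂) * hφeq - A₁ * B₂ * hinv1 + A₂ * B₁ * hinv2
      -- move to ℕ
      have hlt1 : (p.1 / g) * (q.2 / g) < m := by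
        have e1 : (p.1 / g) ^ 2 < m := by
          have : (p.2 / g) ^ 2 ≥ 1 := Nat.one_le_iff_ne_zero.mpr (by positivity)
          omega
        have e2 : (q.2 / g) ^ 2 < m := by
          have : (q.1 / g) ^ 2 ≥ 1 := Nat.one_le_iff_ne_zero.mpr (by positivity)
          omega
        by_contra hcon
        push_neg at hcon
        have hmm : m * m ≤ (p.1 / g) ^ 2 * (q.2 / g) ^ 2 := by
          calc m * m = m ^ 2 := by ring
            _ ≤ ((p.1 / g) * (q.2 / g)) ^ 2 := Nat.pow_le_pow_left hcon 2
            _ = (p.1 / g) ^ 2 * (q.2 / g) ^ 2 := by ring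
        have hprod : (p.1 / g) ^ 2 * (q.2 / g) ^ 2 < m * m :=
          mul_lt_mul'' e1 e2 (Nat.zero_le _) (Nat.zero_le _)
        omega
      have hlt2 : (q.1 / g) * (p.2 / g) < m := by
        have e1 : (q.1 / g) ^ 2 < m := by
          have : (q.2 / g) ^ 2 ≥ 1 := Nat.one_le_iff_ne_zero.mpr (by positivity)
          omega
        have e2 : (p.2 / g) ^ 2 < m := by
          have : (p.1 / g) ^ 2 ≥ 1 := Nat.one_le_iff_ne_zero.mpr (by positivity)
          omega
        by_contra hcon
        push_neg at hcon
        have hmm : m * m ≤ (q.1 / g) ^ 2 * (p.2 / g) ^ 2 := by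
          calc m * m = m ^ 2 := by ring
            _ ≤ ((q.1 / g) * (p.2 / g)) ^ 2 := Nat.pow_le_pow_left hcon 2
            _ = (q.1 / g) ^ 2 * (p.2 / g) ^ 2 := by ring
        have hprod : (q.1 / g) ^ 2 * (p.2 / g) ^ 2 < m * m :=
          mul_lt_mul'' e1 e2 (Nat.zero_le _) (Nat.zero_le _)
        omega
      have hnat : (p.1 / g) * (q.2 / g) = (q.1 / g) * (p.2 / g) := by
        have hcast : (((p.1 / g) * (q.2 / g) : ℕ) : ZMod m) = (((q.1 / g) * (p.2 / g) : ℕ) : ZMod m) := by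
          push_cast
          exact hABmod
        have hv := congrArg ZMod.val hcast
        rwa [ZMod.val_cast_of_lt hlt1, ZMod.val_cast_of_lt hlt2] at hv
      -- conclude equality
      have hbb : p.2 / g = q.2 / g := by
        apply Nat.dvd_antisymm
        · apply Nat.Coprime.dvd_of_dvd_mul_left hcop.symm
          exact ⟨q.1 / g, by rw [hnat]; ring⟩
        · apply Nat.Coprime.dvd_of_dvd_mul_left hcop'.symm
          exact ⟨p.1 / g, by rw [← hnat]; ring⟩
      have haa : p.1 / g = q.1 / g := by
        have hb0 : 0 < q.2 / g := hb1'
        apply Nat.eq_of_mul_eq_mul_right hb0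
        rw [hnat, hbb]
      have hfst : p.1 = q.1 := by rw [← hca, ← hca', haa]
      have hsnd : p.2 = q.2 := by rw [← hcb, ← hcb', hbb]
      exact Prod.ext hfst hsnd
  calc (repFinset l).card
      ≤ l.divisors.card * ((repFinset l).image f).card :=
        Finset.card_le_mul_card_image _ _ hfiber
    _ ≤ l.divisors.card * l.divisors.card :=
        Nat.mul_le_mul_left _ (Finset.card_le_card himage)
    _ = l.divisors.card ^ 2 := (sq _).symm


lemma ncard_le_two_of_bound (l F : ℕ) (hF : 1 ≤ F) (S : Set (ℕ × ℕ)) (hfin : S.Finite)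
    (hmem : ∀ p ∈ S, 1 ≤ p.1 ∧ 1 ≤ p.2 ∧
      (4 * (p.1 : ℤ) - 1) ^ 2 + (4 * (p.2 : ℤ) - 1) ^ 2 = (l : ℤ) ∧ p.1 ≤ F)
    (hl : 4 * (4 * (F : ℤ)) ^ 6 + (4 * (F : ℤ)) ^ 2 < (l : ℤ)) : S.ncard ≤ 2 := by
  by_contra hcon
  push_neg at hcon
  obtain ⟨p, hp, q, hq, r, hr, hpq, hpr, hqr⟩ := (Set.two_lt_ncard hfin).mp hcon
  have key : ∀ u v w : ℕ × ℕ, u ∈ S → v ∈ S → w ∈ S → u.1 < v.1 → v.1 < w.1 → False := by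
    intro u v w hu hv hw h1 h2
    obtain ⟨hu1, hu2, hue, huF⟩ := hmem u hu
    obtain ⟨hv1, hv2, hve, hvF⟩ := hmem v hv
    obtain ⟨hw1, hw2, hwe, hwF⟩ := hmem w hw
    have c1 : (1 : ℤ) ≤ (u.1 : ℤ) := by exact_mod_cast hu1
    have c2 : (u.1 : ℤ) < (v.1 : ℤ) := by exact_mod_cast h1
    have c3 : (v.1 : ℤ) < (w.1 : ℤ) := by exact_mod_cast h2
    have c4 : (w.1 : ℤ) ≤ (F : ℤ) := by exact_mod_cast hwF
    have d1 : (1 : ℤ) ≤ (u.2 : ℤ) := by exact_mod_cast hu2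
    have d2 : (1 : ℤ) ≤ (v.2 : ℤ) := by exact_mod_cast hv2
    have d3 : (1 : ℤ) ≤ (w.2 : ℤ) := by exact_mod_cast hw2
    exact no_three_core l (4 * (F : ℤ)) (4 * (u.1 : ℤ) - 1) (4 * (v.1 : ℤ) - 1)
      (4 * (w.1 : ℤ) - 1) (4 * (u.2 : ℤ) - 1) (4 * (v.2 : ℤ) - 1) (4 * (w.2 : ℤ) - 1)
      (by linarith) (by linarith) (by linarith) (by linarith)
      (by linarith) (by linarith) (by linarith) hue hve hwe hl
  have pinj : ∀ u v : ℕ × ℕ, u ∈ S → v ∈ S → u.1 = v.1 → u = v := by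
    intro u v hu hv h
    obtain ⟨hu1, hu2, hue, huF⟩ := hmem u hu
    obtain ⟨hv1, hv2, hve, hvF⟩ := hmem v hv
    have hc : (u.1 : ℤ) = (v.1 : ℤ) := by exact_mod_cast h
    have hb : (4 * (u.2 : ℤ) - 1) ^ 2 - (4 * (v.2 : ℤ) - 1) ^ 2 = 0 := by
      linear_combination hue - hve - (16 * ((u.1 : ℤ) + (v.1 : ℤ)) - 8) * hc
    have hfac : ((4 * (u.2 : ℤ) - 1) - (4 * (v.2 : ℤ) - 1)) *
        ((4 * (u.2 : ℤ) - 1) + (4 * (v.2 : ℤ) - 1)) = 0 := by linear_combination hb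
    have d1 : (1 : ℤ) ≤ (u.2 : ℤ) := by exact_mod_cast hu2
    have d2 : (1 : ℤ) ≤ (v.2 : ℤ) := by exact_mod_cast hv2
    rcases mul_eq_zero.mp hfac with h0 | h0
    · have h2 : (u.2 : ℤ) = (v.2 : ℤ) := by linarith
      have h2' : u.2 = v.2 := by exact_mod_cast h2
      exact Prod.ext h h2'
    · exfalso; linarith
  have hne1 : p.1 ≠ q.1 := fun h => hpq (pinj p q hp hq h)
  have hne2 : p.1 ≠ r.1 := fun h => hpr (pinj p r hp hr h)
  have hne3 : q.1 ≠ r.1 := fun h => hqr (pinj q r hq hr h)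
  rcases Nat.lt_trichotomy p.1 q.1 with h1 | h1 | h1
  · rcases Nat.lt_trichotomy q.1 r.1 with h2 | h2 | h2
    · exact key p q r hp hq hr h1 h2
    · exact hne3 h2
    · rcases Nat.lt_trichotomy p.1 r.1 with h3 | h3 | h3
      · exact key p r q hp hr hq h3 h2
      · exact hne2 h3
      · exact key r p q hr hp hq h3 h1
  · exact hne1 h1
  · rcases Nat.lt_trichotomy p.1 r.1 with h2 | h2 | h2
    · exact key q p r hq hp hr h1 h2
    · exact hne2 h2
    · rcases Nat.lt_trichotomy q.1 r.1 with h3 | h3 | h3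
      · exact key q r p hq hr hp h3 h2
      · exact hne3 h3
      · exact key r q p hr hq hp h3 h1

/-- Divisor-type bound: for every `ε > 0` there is `C_ε` such that for every integer
`l ≥ 0` and all reals `N₁, N₂ ≥ 1`, the number of pairs of positive integers
`(n₁, n₂)` with `(4n₁−1)² + (4n₂−1)² = l`, `n₁ ≤ N₁`, `n₂ ≤ N₂` is at most
`C_ε (min(N₁,N₂))^ε`. -/
theorem lattice_point_count_bound :
    ∀ ε : ℝ, 0 < ε → ∃ C : ℝ, 0 < C ∧
      ∀ (l : ℕ) (N₁ N₂ : ℝ), 1 ≤ N₁ → 1 ≤ N₂ →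
        ((Set.ncard {p : ℕ × ℕ | 1 ≤ p.1 ∧ 1 ≤ p.2 ∧
            (4 * (p.1 : ℤ) - 1) ^ 2 + (4 * (p.2 : ℤ) - 1) ^ 2 = (l : ℤ) ∧
            (p.1 : ℝ) ≤ N₁ ∧ (p.2 : ℝ) ≤ N₂} : ℕ) : ℝ) ≤
          C * (min N₁ N₂) ^ ε := by
  intro ε hε
  obtain ⟨C₀, hC₀, hC₀b⟩ := divisor_bound (ε / 12) (by linarith)
  refine ⟨C₀ ^ 2 * (10 : ℝ) ^ ε + 2, by positivity, ?_⟩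
  intro l N₁ N₂ hN₁ hN₂
  set M := min N₁ N₂ with hM
  have hM1 : (1 : ℝ) ≤ M := le_min hN₁ hN₂
  have hM0 : (0 : ℝ) < M := by linarith
  have hMε1 : (1 : ℝ) ≤ M ^ ε := Real.one_le_rpow hM1 hε.le
  set S := {p : ℕ × ℕ | 1 ≤ p.1 ∧ 1 ≤ p.2 ∧
      (4 * (p.1 : ℤ) - 1) ^ 2 + (4 * (p.2 : ℤ) - 1) ^ 2 = (l : ℤ) ∧
      (p.1 : ℝ) ≤ N₁ ∧ (p.2 : ℝ) ≤ N₂} with hSdef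
  set f : ℕ × ℕ → ℕ × ℕ := fun p => (4 * p.1 - 1, 4 * p.2 - 1) with hfdef
  have hfinj : Set.InjOn f S := by
    intro u hu v hv h
    obtain ⟨hu1, hu2, -, -, -⟩ := hu
    obtain ⟨hv1, hv2, -, -, -⟩ := hv
    rw [hfdef] at h
    simp only [Prod.mk.injEq] at h
    have := h.1
    have := h.2
    have h1 : u.1 = v.1 := by omega
    have h2 : u.2 = v.2 := by omega
    exact Prod.ext h1 h2
  have himg : f '' S ⊆ ↑(repFinset l) := by
    rintro _ ⟨p, hp, rfl⟩
    obtain ⟨h1, h2, heq, hb1, hb2⟩ := hp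
    have hc1 : ((4 * p.1 - 1 : ℕ) : ℤ) = 4 * (p.1 : ℤ) - 1 := by
      rw [Nat.cast_sub (by omega)]; push_cast; ring
    have hc2 : ((4 * p.2 - 1 : ℕ) : ℤ) = 4 * (p.2 : ℤ) - 1 := by
      rw [Nat.cast_sub (by omega)]; push_cast; ring
    have hZ : ((4 * p.1 - 1 : ℕ) : ℤ) ^ 2 + ((4 * p.2 - 1 : ℕ) : ℤ) ^ 2 = (l : ℤ) := by
      rw [hc1, hc2]; exact heq
    have hNat : (4 * p.1 - 1) ^ 2 + (4 * p.2 - 1) ^ 2 = l := by exact_mod_cast hZ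
    have hr1 : 4 * p.1 - 1 ≤ l := by
      have := Nat.le_self_pow (two_ne_zero) (4 * p.1 - 1)
      omega
    have hr2 : 4 * p.2 - 1 ≤ l := by
      have := Nat.le_self_pow (two_ne_zero) (4 * p.2 - 1)
      omega
    simp only [hfdef, repFinset, Finset.coe_filter, Set.mem_setOf_eq, Finset.mem_product,
      Finset.mem_range]
    exact ⟨⟨by omega, by omega⟩, by omega, by omega, hNat⟩
  have hSfin : S.Finite :=
    Set.Finite.of_finite_image (Set.Finite.subset (Finset.finite_toSet _) himg) hfinj
  have hle1 : S.ncard ≤ (repFinset l).card := by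
    rw [← Set.ncard_coe_finset, ← Set.ncard_image_of_injOn hfinj]
    exact Set.ncard_le_ncard himg (Finset.finite_toSet _)
  rcases Set.eq_empty_or_nonempty S with hemp | ⟨p₀, hp₀⟩
  · rw [hemp]
    simp only [Set.ncard_empty, Nat.cast_zero]
    positivity
  have hl1 : 1 ≤ l := by
    obtain ⟨h1, h2, heq, -, -⟩ := hp₀
    have c1 : (1 : ℤ) ≤ (p₀.1 : ℤ) := by exact_mod_cast h1
    have c2 : (1 : ℤ) ≤ (p₀.2 : ℤ) := by exact_mod_cast h2
    have : (1 : ℤ) ≤ (l : ℤ) := by nlinarith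
    exact_mod_cast this
  rcases le_or_gt ((l : ℝ)) ((10 * M) ^ (6 : ℕ)) with hcase | hcase
  · -- divisor bound case
    have hdl := hC₀b l hl1
    have hb1 : (S.ncard : ℝ) ≤ ((l.divisors.card : ℕ) : ℝ) ^ 2 := by
      have h := hle1.trans (repFinset_card_le l hl1)
      exact_mod_cast h
    have hb2 : ((l.divisors.card : ℕ) : ℝ) ^ 2 ≤ (C₀ * (l : ℝ) ^ (ε / 12)) ^ 2 :=
      pow_le_pow_left₀ (by positivity) hdl 2
    have hexp : ε / 12 * ((2 : ℕ) : ℝ) = ε / 6 := by push_cast; ring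
    have hb3 : (C₀ * (l : ℝ) ^ (ε / 12)) ^ 2 = C₀ ^ 2 * (l : ℝ) ^ (ε / 6) := by
      rw [mul_pow, ← Real.rpow_natCast ((l : ℝ) ^ (ε / 12)) 2,
        ← Real.rpow_mul (by positivity), hexp]
    have hb4 : (l : ℝ) ^ (ε / 6) ≤ ((10 * M) ^ (6 : ℕ)) ^ (ε / 6) :=
      Real.rpow_le_rpow (by positivity) hcase (by positivity)
    have hb5 : (((10 * M) : ℝ) ^ (6 : ℕ)) ^ (ε / 6) = (10 * M) ^ ε := by
      rw [← Real.rpow_natCast (10 * M) 6, ← Real.rpow_mul (by positivity)]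
      norm_num
      rw [mul_div_cancel₀]
      norm_num
    have hb6 : ((10 * M) : ℝ) ^ ε = 10 ^ ε * M ^ ε :=
      Real.mul_rpow (by norm_num) (by positivity)
    have hfin : (S.ncard : ℝ) ≤ C₀ ^ 2 * (10 ^ ε * M ^ ε) := by
      calc (S.ncard : ℝ) ≤ ((l.divisors.card : ℕ) : ℝ) ^ 2 := hb1
        _ ≤ (C₀ * (l : ℝ) ^ (ε / 12)) ^ 2 := hb2
        _ = C₀ ^ 2 * (l : ℝ) ^ (ε / 6) := hb3
        _ ≤ C₀ ^ 2 * ((10 * M) ^ (6 : ℕ)) ^ (ε / 6) := by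
            apply mul_le_mul_of_nonneg_left hb4 (by positivity)
        _ = C₀ ^ 2 * (10 ^ ε * M ^ ε) := by rw [hb5, hb6]
    have hMε0 : (0 : ℝ) ≤ M ^ ε := by positivity
    nlinarith [hfin, hMε0, hMε1]
  · -- curvature case
    have hcount : S.ncard ≤ 2 := by
      rcases le_total N₁ N₂ with hN | hN
      · set F : ℕ := ⌊N₁⌋₊ with hFdef
        have hF1 : 1 ≤ F := Nat.le_floor (by exact_mod_cast hN₁)
        have hMN : M = N₁ := min_eq_left hN
        have hFM : (F : ℝ) ≤ M := by rw [hMN]; exact Nat.floor_le (by linarith)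
        have hlF : 4 * (4 * (F : ℤ)) ^ 6 + (4 * (F : ℤ)) ^ 2 < (l : ℤ) := by
          have hreal : 4 * (4 * (F : ℝ)) ^ 6 + (4 * (F : ℝ)) ^ 2 < (l : ℝ) := by
            have hp6 : (F : ℝ) ^ 6 ≤ M ^ 6 := pow_le_pow_left₀ (by positivity) hFM 6
            have hp2 : (F : ℝ) ^ 2 ≤ M ^ 2 := pow_le_pow_left₀ (by positivity) hFM 2
            have hM26 : M ^ 2 ≤ M ^ 6 := pow_le_pow_right₀ hM1 (by norm_num)
            nlinarith [hcase]
          exact_mod_cast hreal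
        apply ncard_le_two_of_bound l F hF1 S hSfin _ hlF
        intro u hu
        obtain ⟨h1, h2, he, hx, hy⟩ := hu
        exact ⟨h1, h2, he, Nat.le_floor hx⟩
      · set F : ℕ := ⌊N₂⌋₊ with hFdef
        have hF1 : 1 ≤ F := Nat.le_floor (by exact_mod_cast hN₂)
        have hMN : M = N₂ := min_eq_right hN
        have hFM : (F : ℝ) ≤ M := by rw [hMN]; exact Nat.floor_le (by linarith)
        have hlF : 4 * (4 * (F : ℤ)) ^ 6 + (4 * (F : ℤ)) ^ 2 < (l : ℤ) := by
          have hreal : 4 * (4 * (F : ℝ)) ^ 6 + (4 * (F : ℝ)) ^ 2 < (l : ℝ) := by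
            have hp6 : (F : ℝ) ^ 6 ≤ M ^ 6 := pow_le_pow_left₀ (by positivity) hFM 6
            have hp2 : (F : ℝ) ^ 2 ≤ M ^ 2 := pow_le_pow_left₀ (by positivity) hFM 2
            have hM26 : M ^ 2 ≤ M ^ 6 := pow_le_pow_right₀ hM1 (by norm_num)
            nlinarith [hcase]
          exact_mod_cast hreal
        have hswap : S.ncard = (Prod.swap '' S).ncard :=
          (Set.ncard_image_of_injective S Prod.swap_injective).symm
        rw [hswap]
        apply ncard_le_two_of_bound l F hF1 _ (hSfin.image _) _ hlF
        rintro _ ⟨u, hu, rfl⟩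
        obtain ⟨h1, h2, he, hx, hy⟩ := hu
        refine ⟨h2, h1, ?_, Nat.le_floor hy⟩
        simp only [Prod.swap]
        linear_combination he
    have h2M : (2 : ℝ) ≤ 2 * M ^ ε := by linarith
    have hcast : (S.ncard : ℝ) ≤ 2 := by exact_mod_cast hcount
    have hnn : (0 : ℝ) ≤ C₀ ^ 2 * 10 ^ ε * M ^ ε := by positivity
    nlinarith [hcast, h2M, hnn]
end
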